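/- arXiv:1111.1141 — 4 statements merged into one kernel-verified Lean document; each statement's English description precedes it below -/
import Mathlib

section
/- If Γ : S_L → ℝ³ is an injective arc-length parametrization of a closed curve (i.e. |Γ'| = 1 a.e.) such that |Γ'(x) - Γ'(y)| ≤ C|x-y|^α for all x, y, then there exists a constant λ = λ(C, α, L) > 0 such that |Γ(x) - Γ(y)| ≥ λ|x-y| for all x, y ∈ S_L; i.e. Γ is bi-Lipschitz. -/
open MeasureTheory Set
open scoped InnerProductSpace

/-- The intrinsic distance on the circle is at most the real distance. -/
lemma addCircle_dist_le_abs (L x y : ℝ) :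
    dist (x : AddCircle L) (y : AddCircle L) ≤ |x - y| := by
  rw [dist_eq_norm]
  have h : (x : AddCircle L) - (y : AddCircle L) = ((x - y : ℝ) : AddCircle L) := rfl
  rw [h]
  simpa [Real.norm_eq_abs] using
    (QuotientAddGroup.norm_mk_le_norm (S := AddSubgroup.zmultiples L) (m := x - y))

/-- Every point in the circle has strictly smaller intrinsic distance than half the period. -/
lemma addCircle_dist_le_half (L : ℝ) (hL : 0 < L) (x y : ℝ) :
    dist (x : AddCircle L) (y : AddCircle L) ≤ L / 2 := by
  rw [dist_eq_norm]
  simpa [abs_of_pos hL] using AddCircle.norm_le_half_period (p := L)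
    (x := (x : AddCircle L) - (y : AddCircle L)) hL.ne'

/-- Key local estimate: if the unit-speed derivative doesn't vary too much on `[y, x]`,
then the chord length is at least half the arc length. -/
lemma small_step (C α : ℝ) (hα0 : 0 < α)
    (Γ Γ' : ℝ → EuclideanSpace ℝ (Fin 3))
    (hderiv : ∀ x, HasDerivAt Γ (Γ' x) x)
    (hcont : Continuous Γ')
    (hunit' : ∀ x, ‖Γ' x‖ = 1)
    (hhol' : ∀ x y : ℝ, ‖Γ' x - Γ' y‖ ≤ C * |x - y| ^ α)
    (hCpos : 0 ≤ C)
    {x y : ℝ} (hxy : y ≤ x) (hsmall : C * (x - y) ^ α ≤ 1) :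
    (x - y) / 2 ≤ ‖Γ x - Γ y‖ := by
  set v := Γ' y with hv
  have hint : IntervalIntegrable Γ' volume y x := hcont.intervalIntegrable _ _
  have hFTC : (∫ t in y..x, Γ' t) = Γ x - Γ y :=
    intervalIntegral.integral_eq_sub_of_hasDerivAt (fun t _ => hderiv t) hint
  have hkey : ⟪v, Γ x - Γ y⟫_ℝ = ∫ t in y..x, ⟪v, Γ' t⟫_ℝ := by
    rw [← hFTC]
    exact ((innerSL ℝ v).intervalIntegral_comp_comm hint).symm
  have hpt : ∀ t ∈ Icc y x, (1 : ℝ) / 2 ≤ ⟪v, Γ' t⟫_ℝ := by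
    intro t ht
    have h1 : ‖Γ' t - v‖ ≤ C * |t - y| ^ α := hhol' t y
    have h2 : C * |t - y| ^ α ≤ C * (x - y) ^ α := by
      apply mul_le_mul_of_nonneg_left _ hCpos
      apply Real.rpow_le_rpow (abs_nonneg _) _ hα0.le
      rw [abs_of_nonneg (by linarith [ht.1])]
      linarith [ht.2]
    have h3 : ‖Γ' t - v‖ ≤ 1 := h1.trans (h2.trans hsmall)
    have h4 : ‖Γ' t - v‖ ^ 2 ≤ 1 := by nlinarith [norm_nonneg (Γ' t - v)]
    have h5 : ‖Γ' t - v‖ ^ 2 = ‖Γ' t‖ ^ 2 - 2 * ⟪Γ' t, v⟫_ℝ + ‖v‖ ^ 2 :=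
      norm_sub_sq_real _ _
    rw [hunit' t, hunit' y] at h5
    rw [real_inner_comm]
    nlinarith
  have hintinner : IntervalIntegrable (fun t => ⟪v, Γ' t⟫_ℝ) volume y x :=
    (continuous_const.inner hcont).intervalIntegrable _ _
  have hmono : (∫ _ in y..x, (1 : ℝ) / 2) ≤ ∫ t in y..x, ⟪v, Γ' t⟫_ℝ :=
    intervalIntegral.integral_mono_on hxy (intervalIntegrable_const) hintinner hpt
  rw [intervalIntegral.integral_const, smul_eq_mul] at hmono
  have hcs : ⟪v, Γ x - Γ y⟫_ℝ ≤ ‖Γ x - Γ y‖ := by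
    have := real_inner_le_norm v (Γ x - Γ y)
    rwa [hunit' y, one_mul] at this
  calc (x - y) / 2 = (x - y) * (1 / 2) := by ring
    _ ≤ ∫ t in y..x, ⟪v, Γ' t⟫_ℝ := hmono
    _ = ⟪v, Γ x - Γ y⟫_ℝ := hkey.symm
    _ ≤ ‖Γ x - Γ y‖ := hcs

/-- If `Γ : S_L → ℝ³` (formalized as an `L`-periodic map on `ℝ`,
injective on a fundamental domain) is an arc-length parametrization (`‖Γ'‖ = 1` a.e.)
whose derivative is `α`-Hölder with constant `C` (with respect to the intrinsic
distance on the circle `ℝ/Lℤ`), then `Γ` is bi-Lipschitz: there is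
`λ = λ(C, α, L) > 0` with `‖Γ(x) - Γ(y)‖ ≥ λ·dist(x,y)`. -/
theorem curve_biLipschitz (L : ℝ) (hL : 0 < L) (C α : ℝ) (hC : 0 < C)
    (hα : α ∈ Set.Ioo (0 : ℝ) 1)
    (Γ Γ' : ℝ → EuclideanSpace ℝ (Fin 3))
    (hper : Function.Periodic Γ L)
    (hinj : Set.InjOn Γ (Set.Ico 0 L))
    (hderiv : ∀ x, HasDerivAt Γ (Γ' x) x)
    (hunit : ∀ᵐ x, ‖Γ' x‖ = 1)
    (hhol : ∀ x y : ℝ, ‖Γ' x - Γ' y‖ ≤ C * dist (x : AddCircle L) (y : AddCircle L) ^ α) :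
    ∃ lam : ℝ, 0 < lam ∧
      ∀ x y : ℝ, lam * dist (x : AddCircle L) (y : AddCircle L) ≤ ‖Γ x - Γ y‖ := by
  obtain ⟨hα0, hα1⟩ := hα
  -- Hölder bound with respect to the real distance
  have hhol' : ∀ x y : ℝ, ‖Γ' x - Γ' y‖ ≤ C * |x - y| ^ α := by
    intro x y
    refine (hhol x y).trans (mul_le_mul_of_nonneg_left ?_ hC.le)
    exact Real.rpow_le_rpow dist_nonneg (addCircle_dist_le_abs L x y) hα0.le
  -- continuity of the derivative
  have hcont : Continuous Γ' := by
    rw [Metric.continuous_iff]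
    intro y ε hε
    refine ⟨(ε / (2 * C)) ^ (1 / α), Real.rpow_pos_of_pos (by positivity) _, fun x hx => ?_⟩
    have h1 : |x - y| ^ α ≤ ((ε / (2 * C)) ^ (1 / α)) ^ α :=
      Real.rpow_le_rpow (abs_nonneg _) (by simpa [Real.dist_eq] using hx.le) hα0.le
    have h2 : ((ε / (2 * C)) ^ (1 / α)) ^ α = ε / (2 * C) := by
      rw [← Real.rpow_mul (by positivity), one_div_mul_cancel hα0.ne', Real.rpow_one]
    have h3 : ‖Γ' x - Γ' y‖ ≤ C * (ε / (2 * C)) := by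
      refine (hhol' x y).trans ?_
      apply mul_le_mul_of_nonneg_left _ hC.le
      rw [← h2]
      exact Real.rpow_le_rpow (abs_nonneg _) (by simpa [Real.dist_eq] using hx.le) hα0.le
    have h4 : C * (ε / (2 * C)) = ε / 2 := by field_simp
    rw [dist_eq_norm]
    calc ‖Γ' x - Γ' y‖ ≤ ε / 2 := by rw [h4] at h3; exact h3
      _ < ε := by linarith
  -- the derivative is of unit norm everywhere
  have hunit' : ∀ x, ‖Γ' x‖ = 1 := by
    have h := (Continuous.ae_eq_iff_eq volume hcont.norm continuous_const).mp hunit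
    exact fun x => congrFun h x
  -- continuity of the curve
  have hΓcont : Continuous Γ := by
    rw [continuous_iff_continuousAt]
    exact fun x => (hderiv x).continuousAt
  -- choice of the small scale δ
  set δ : ℝ := min (L / 2) ((1 / C) ^ (1 / α)) with hδdef
  have hδpos : 0 < δ := lt_min (by linarith) (Real.rpow_pos_of_pos (by positivity) _)
  have hδL : δ ≤ L / 2 := min_le_left _ _
  have hδC : C * δ ^ α ≤ 1 := by
    have h1 : δ ≤ (1 / C) ^ (1 / α) := min_le_right _ _
    have h2 : δ ^ α ≤ ((1 / C) ^ (1 / α)) ^ α := Real.rpow_le_rpow hδpos.le h1 hα0.le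
    rw [← Real.rpow_mul (by positivity), one_div_mul_cancel hα0.ne', Real.rpow_one] at h2
    calc C * δ ^ α ≤ C * (1 / C) := mul_le_mul_of_nonneg_left h2 hC.le
      _ = 1 := by field_simp
  -- reduction to the fundamental domain
  have hred : ∀ x : ℝ, ∃ a, a ∈ Ico 0 L ∧ Γ a = Γ x ∧ (a : AddCircle L) = (x : AddCircle L) := by
    intro x
    refine ⟨toIcoMod hL 0 x, by simpa using toIcoMod_mem_Ico hL 0 x, ?_, ?_⟩
    · rw [toIcoMod]
      exact hper.sub_zsmul_eq _
    · rw [QuotientAddGroup.eq_iff_sub_mem, toIcoMod, sub_sub_cancel_left]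
      exact AddSubgroup.neg_mem _ (AddSubgroup.zsmul_mem _ (AddSubgroup.mem_zmultiples L) _)
  -- the compact set of pairs at distance at least δ and positivity of the minimum
  set F : ℝ × ℝ → ℝ := fun p => ‖Γ p.1 - Γ p.2‖ with hF
  have hFcont : Continuous F := ((hΓcont.comp continuous_fst).sub (hΓcont.comp continuous_snd)).norm
  set K : Set (ℝ × ℝ) := (Icc 0 L ×ˢ Icc 0 L) ∩
      {p : ℝ × ℝ | δ ≤ dist ((p.1 : AddCircle L)) ((p.2 : AddCircle L))} with hK
  have hdcont : Continuous fun p : ℝ × ℝ => dist ((p.1 : AddCircle L)) ((p.2 : AddCircle L)) :=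
    Continuous.dist ((AddCircle.continuous_mk' L).comp continuous_fst)
      ((AddCircle.continuous_mk' L).comp continuous_snd)
  have hKc : IsCompact K :=
    (isCompact_Icc.prod isCompact_Icc).inter_right (isClosed_le continuous_const hdcont)
  have hKne : K.Nonempty := by
    refine ⟨(L / 2, 0), ⟨⟨by constructor <;> linarith, by constructor <;> linarith⟩, ?_⟩⟩
    have : dist (((L / 2 : ℝ)) : AddCircle L) ((0 : ℝ) : AddCircle L) = L / 2 := by
      rw [dist_eq_norm]
      norm_num
      try rw [abs_of_pos hL]
      try linarith
    rw [Set.mem_setOf_eq, this]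
    exact hδL
  obtain ⟨p₀, hp₀K, hp₀min⟩ := hKc.exists_isMinOn hKne hFcont.continuousOn
  set m : ℝ := F p₀ with hm
  have hmpos : 0 < m := by
    rcases hp₀K with ⟨⟨h1, h2⟩, h3⟩
    have hne : Γ p₀.1 ≠ Γ p₀.2 := by
      intro heq
      obtain ⟨a, haI, haΓ, hac⟩ := hred p₀.1
      obtain ⟨b, hbI, hbΓ, hbc⟩ := hred p₀.2
      have hab : a = b := hinj haI hbI (by rw [haΓ, hbΓ, heq])
      have : dist ((p₀.1 : AddCircle L)) ((p₀.2 : AddCircle L)) = 0 := by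
        rw [← hac, ← hbc, hab, dist_self]
      rw [Set.mem_setOf_eq, this] at h3
      linarith
    have : F p₀ ≠ 0 := by
      simp only [hF, ne_eq, norm_eq_zero, sub_eq_zero]
      exact hne
    exact lt_of_le_of_ne (norm_nonneg _) (Ne.symm this)
  -- the final constant
  refine ⟨min (1 / 2) (m / (L / 2)), lt_min (by norm_num) (by positivity), ?_⟩
  intro x y
  set d : ℝ := dist ((x : AddCircle L)) ((y : AddCircle L)) with hd
  have hd0 : 0 ≤ d := dist_nonneg
  have hdhalf : d ≤ L / 2 := addCircle_dist_le_half L hL x y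
  by_cases hcase : d ≤ δ
  · -- small distance: use the local estimate
    set n : ℤ := round (L⁻¹ * (x - y)) with hn
    set w : ℝ := x - y - n * L with hw
    have hdw : d = |w| := by
      rw [hd, dist_eq_norm]
      have h : (x : AddCircle L) - (y : AddCircle L) = ((x - y : ℝ) : AddCircle L) := rfl
      rw [h, AddCircle.norm_eq]
    have hΓx : Γ (x - n * L) = Γ x := hper.sub_int_mul_eq n
    have hsub : x - n * L - y = w := by rw [hw]; ring
    rcases le_or_gt 0 w with hw0 | hw0
    · have hyx : y ≤ x - n * L := by linarith [hsub, abs_of_nonneg hw0]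
      have hxy' : x - n * L - y = d := by rw [hsub, hdw, abs_of_nonneg hw0]
      have hsmall : C * (x - n * L - y) ^ α ≤ 1 := by
        rw [hxy']
        calc C * d ^ α ≤ C * δ ^ α :=
              mul_le_mul_of_nonneg_left (Real.rpow_le_rpow hd0 hcase hα0.le) hC.le
          _ ≤ 1 := hδC
      have := small_step C α hα0 Γ Γ' hderiv hcont hunit' hhol' hC.le hyx hsmall
      rw [hxy', hΓx] at this
      calc min (1 / 2) (m / (L / 2)) * d ≤ (1 / 2) * d :=
            mul_le_mul_of_nonneg_right (min_le_left _ _) hd0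
        _ = d / 2 := by ring
        _ ≤ ‖Γ x - Γ y‖ := this
    · have hyx : x - n * L ≤ y := by nlinarith [hsub, abs_of_neg hw0]
      have hxy' : y - (x - n * L) = d := by rw [hdw, abs_of_neg hw0]; linarith [hsub]
      have hsmall : C * (y - (x - n * L)) ^ α ≤ 1 := by
        rw [hxy']
        calc C * d ^ α ≤ C * δ ^ α :=
              mul_le_mul_of_nonneg_left (Real.rpow_le_rpow hd0 hcase hα0.le) hC.le
          _ ≤ 1 := hδC
      have := small_step C α hα0 Γ Γ' hderiv hcont hunit' hhol' hC.le hyx hsmall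
      rw [hxy', hΓx, norm_sub_rev] at this
      calc min (1 / 2) (m / (L / 2)) * d ≤ (1 / 2) * d :=
            mul_le_mul_of_nonneg_right (min_le_left _ _) hd0
        _ = d / 2 := by ring
        _ ≤ ‖Γ x - Γ y‖ := this
  · -- large distance: use the compactness minimum
    push_neg at hcase
    obtain ⟨a, haI, haΓ, hac⟩ := hred x
    obtain ⟨b, hbI, hbΓ, hbc⟩ := hred y
    have habK : (a, b) ∈ K := by
      refine ⟨⟨⟨haI.1, haI.2.le⟩, ⟨hbI.1, hbI.2.le⟩⟩, ?_⟩
      rw [Set.mem_setOf_eq]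
      show δ ≤ dist ((a : AddCircle L)) ((b : AddCircle L))
      rw [hac, hbc]
      exact hcase.le
    have hmle : m ≤ ‖Γ x - Γ y‖ := by
      have h := hp₀min habK
      simp only [Set.mem_setOf_eq] at h
      calc m ≤ ‖Γ a - Γ b‖ := h
        _ = ‖Γ x - Γ y‖ := by rw [haΓ, hbΓ]
    calc min (1 / 2) (m / (L / 2)) * d ≤ (m / (L / 2)) * (L / 2) := by
          apply mul_le_mul (min_le_right _ _) hdhalf hd0 (by positivity)
      _ = m := by field_simp
      _ ≤ ‖Γ x - Γ y‖ := hmle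
end

section
/- Let Γ : S_L → ℝⁿ be an arc-length parametrization with |Γ'(x) - Γ'(y)| ≤ C|x-y|^α, and let x < z < y in S_L. Then the unit secant vectors satisfy |(Γ(x) - Γ(y))/|Γ(x) - Γ(y)| - (Γ(x) - Γ(z))/|Γ(x) - Γ(z)|| ≤ 5C|x - y|^α. -/
open MeasureTheory Set

lemma unit_dir_dist {E : Type*} [NormedAddCommGroup E] [NormedSpace ℝ E]
    (a b : E) (hb : b ≠ 0) :
    ‖‖a‖⁻¹ • a - ‖b‖⁻¹ • b‖ ≤ 2 * ‖a - b‖ / ‖b‖ := by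
  rcases eq_or_ne a 0 with rfl | ha
  · have hbn : (0:ℝ) < ‖b‖ := norm_pos_iff.mpr hb
    rw [norm_zero, inv_zero, zero_smul, zero_sub, norm_neg, zero_sub, norm_neg,
      norm_smul, norm_inv, norm_norm, inv_mul_cancel₀ hbn.ne', le_div_iff₀ hbn]
    linarith
  · have hbn : (0:ℝ) < ‖b‖ := norm_pos_iff.mpr hb
    have han : (0:ℝ) < ‖a‖ := norm_pos_iff.mpr ha
    have key : ‖a‖⁻¹ • a - ‖b‖⁻¹ • b
        = ‖b‖⁻¹ • (a - b) + (‖a‖⁻¹ - ‖b‖⁻¹) • a := by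
      rw [sub_smul, smul_sub]; abel
    calc ‖‖a‖⁻¹ • a - ‖b‖⁻¹ • b‖
        ≤ ‖‖b‖⁻¹ • (a - b)‖ + ‖(‖a‖⁻¹ - ‖b‖⁻¹) • a‖ := by
          rw [key]; exact norm_add_le _ _
      _ = ‖b‖⁻¹ * ‖a - b‖ + |‖a‖⁻¹ - ‖b‖⁻¹| * ‖a‖ := by
          rw [norm_smul, norm_smul, norm_inv, norm_norm, Real.norm_eq_abs]
      _ ≤ ‖b‖⁻¹ * ‖a - b‖ + ‖b‖⁻¹ * ‖a - b‖ := by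
          have : |‖a‖⁻¹ - ‖b‖⁻¹| * ‖a‖ = |‖b‖ - ‖a‖| * ‖b‖⁻¹ := by
            rw [inv_sub_inv han.ne' hbn.ne', abs_div, abs_mul, abs_of_pos han,
              abs_of_pos hbn, div_mul_eq_mul_div]
            field_simp
          rw [this, mul_comm]
          have h4 : |‖b‖ - ‖a‖| ≤ ‖a - b‖ := by
            rw [abs_sub_comm]; exact abs_norm_sub_norm_le a b
          gcongr
      _ = 2 * ‖a - b‖ / ‖b‖ := by field_simp; ring

lemma secant_close {n : ℕ} (C α : ℝ) (hC : 0 ≤ C) (hα0 : 0 < α)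
    (Γ Γ' : ℝ → EuclideanSpace ℝ (Fin n))
    (hderiv : ∀ x, HasDerivAt Γ (Γ' x) x)
    (hunit : ∀ x, ‖Γ' x‖ = 1)
    (hhol : ∀ x y : ℝ, ‖Γ' x - Γ' y‖ ≤ C * |x - y| ^ α)
    (x y : ℝ) (hxy : x < y) (hsmall : C * (y - x) ^ α < 2 / 5) :
    ‖‖Γ x - Γ y‖⁻¹ • (Γ x - Γ y) + Γ' x‖ ≤ 2 * (C * (y - x) ^ α) := by
  have hs : 0 < y - x := sub_pos.mpr hxy
  have hsα : 0 < (y - x) ^ α := Real.rpow_pos_of_pos hs α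
  -- continuity of Γ'
  have hcont : Continuous Γ' := by
    rw [continuous_iff_continuousAt]
    intro t
    rw [ContinuousAt, tendsto_iff_norm_sub_tendsto_zero]
    have hb : Filter.Tendsto (fun s => C * |s - t| ^ α) (nhds t) (nhds 0) := by
      have h1 : Filter.Tendsto (fun s : ℝ => |s - t|) (nhds t) (nhds 0) := by
        have h0 : Filter.Tendsto (fun s : ℝ => s - t) (nhds t) (nhds (t - t)) :=
          (continuous_sub_right t).tendsto t
        rw [sub_self] at h0
        simpa using h0.abs
      have h2 : Filter.Tendsto (fun u : ℝ => C * u ^ α) (nhds 0) (nhds 0) := by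
        have h3 : ContinuousAt (fun u : ℝ => u ^ α) 0 :=
          Real.continuousAt_rpow_const 0 α (Or.inr hα0.le)
        have := (h3.const_smul C).tendsto
        simpa [ContinuousAt, Real.zero_rpow hα0.ne', smul_eq_mul, Pi.smul_def] using this
      exact h2.comp h1
    exact squeeze_zero (fun s => norm_nonneg _) (fun s => hhol s t) hb
  have hint : IntervalIntegrable Γ' volume x y := hcont.intervalIntegrable x y
  have hFTC : ∫ t in x..y, Γ' t = Γ y - Γ x :=
    intervalIntegral.integral_eq_sub_of_hasDerivAt (fun t _ => hderiv t) hint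
  -- key estimate
  have key : ‖(Γ y - Γ x) - (y - x) • Γ' x‖ ≤ C * (y - x) ^ α * |y - x| := by
    have hconst : (y - x) • Γ' x = ∫ _t in x..y, Γ' x := by
      rw [intervalIntegral.integral_const]
    rw [← hFTC, hconst, ← intervalIntegral.integral_sub hint intervalIntegrable_const]
    refine intervalIntegral.norm_integral_le_of_norm_le_const ?_
    intro t ht
    rw [Set.uIoc_of_le hxy.le] at ht
    calc ‖Γ' t - Γ' x‖ ≤ C * |t - x| ^ α := hhol t x
      _ ≤ C * (y - x) ^ α := by
          gcongr
          rw [abs_of_pos (sub_pos.mpr ht.1)]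
          linarith [ht.2]
  rw [abs_of_pos hs] at key
  set a := Γ x - Γ y with ha_def
  set b := (x - y) • Γ' x with hb_def
  have hab : ‖a - b‖ ≤ C * (y - x) ^ α * (y - x) := by
    have : a - b = -((Γ y - Γ x) - (y - x) • Γ' x) := by
      rw [ha_def, hb_def]
      have : (x - y) • Γ' x = -((y - x) • Γ' x) := by
        rw [← neg_smul]; ring_nf
      rw [this]; abel
    rw [this, norm_neg]; exact key
  have hbnorm : ‖b‖ = y - x := by
    rw [hb_def, norm_smul, hunit, Real.norm_eq_abs, abs_sub_comm, abs_of_pos hs, mul_one]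
  have hbne : b ≠ 0 := by
    intro h; rw [h, norm_zero] at hbnorm; linarith
  have hd : ‖‖a‖⁻¹ • a - ‖b‖⁻¹ • b‖ ≤ 2 * ‖a - b‖ / ‖b‖ := unit_dir_dist a b hbne
  have hbb : ‖b‖⁻¹ • b = -(Γ' x) := by
    rw [hb_def, hbnorm, smul_smul]
    have hne : (y - x) ≠ 0 := hs.ne'
    have h5 : (y - x)⁻¹ * (x - y) = -1 := by field_simp; ring
    rw [h5, neg_one_smul]
  rw [hbb, sub_neg_eq_add] at hd
  calc ‖‖a‖⁻¹ • a + Γ' x‖ ≤ 2 * ‖a - b‖ / ‖b‖ := hd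
    _ ≤ 2 * (C * (y - x) ^ α * (y - x)) / (y - x) := by
        rw [hbnorm]; gcongr
    _ = 2 * (C * (y - x) ^ α) := by field_simp

/-- For an injective arc-length parametrization `Γ` with `α`-Hölder
derivative (constant `C`) and `x < z < y`, the unit secant vectors from `Γ(x)` to
`Γ(y)` resp. `Γ(z)` differ by at most `5C|x-y|^α`. -/
theorem unit_secant_estimate (n : ℕ) (C α : ℝ) (hC : 0 < C) (hα : α ∈ Set.Ioo (0 : ℝ) 1)
    (Γ Γ' : ℝ → EuclideanSpace ℝ (Fin n))
    (hinj : Function.Injective Γ)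
    (hderiv : ∀ x, HasDerivAt Γ (Γ' x) x)
    (hunit : ∀ x, ‖Γ' x‖ = 1)
    (hhol : ∀ x y : ℝ, ‖Γ' x - Γ' y‖ ≤ C * |x - y| ^ α)
    (x z y : ℝ) (hxz : x < z) (hzy : z < y) :
    ‖‖Γ x - Γ y‖⁻¹ • (Γ x - Γ y) - ‖Γ x - Γ z‖⁻¹ • (Γ x - Γ z)‖
      ≤ 5 * C * |x - y| ^ α := by
  have hxy : x < y := hxz.trans hzy
  have hs : 0 < y - x := sub_pos.mpr hxy
  have habs : |x - y| = y - x := by rw [abs_sub_comm, abs_of_pos hs]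
  have hunit_norm : ∀ v : EuclideanSpace ℝ (Fin n), ‖‖v‖⁻¹ • v‖ ≤ 1 := by
    intro v
    rcases eq_or_ne v 0 with rfl | hv
    · simp
    · rw [norm_smul, norm_inv, norm_norm, inv_mul_cancel₀ (norm_ne_zero_iff.mpr hv)]
  by_cases hbig : 2 ≤ 5 * C * |x - y| ^ α
  · calc ‖‖Γ x - Γ y‖⁻¹ • (Γ x - Γ y) - ‖Γ x - Γ z‖⁻¹ • (Γ x - Γ z)‖
        ≤ ‖‖Γ x - Γ y‖⁻¹ • (Γ x - Γ y)‖ + ‖‖Γ x - Γ z‖⁻¹ • (Γ x - Γ z)‖ :=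
          norm_sub_le _ _
      _ ≤ 1 + 1 := add_le_add (hunit_norm _) (hunit_norm _)
      _ ≤ 5 * C * |x - y| ^ α := by linarith
  · push_neg at hbig
    rw [habs] at hbig
    have hsmally : C * (y - x) ^ α < 2 / 5 := by linarith
    have hmono : C * (z - x) ^ α ≤ C * (y - x) ^ α := by
      have h6 : (z - x) ^ α ≤ (y - x) ^ α :=
        Real.rpow_le_rpow (by linarith) (by linarith) hα.1.le
      exact mul_le_mul_of_nonneg_left h6 hC.le
    have hsmallz : C * (z - x) ^ α < 2 / 5 := lt_of_le_of_lt hmono hsmally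
    have h1 := secant_close C α hC.le hα.1 Γ Γ' hderiv hunit hhol x y hxy hsmally
    have h2 := secant_close C α hC.le hα.1 Γ Γ' hderiv hunit hhol x z hxz hsmallz
    rw [habs]
    have htri : ‖‖Γ x - Γ y‖⁻¹ • (Γ x - Γ y) - ‖Γ x - Γ z‖⁻¹ • (Γ x - Γ z)‖
        ≤ ‖‖Γ x - Γ y‖⁻¹ • (Γ x - Γ y) + Γ' x‖ + ‖‖Γ x - Γ z‖⁻¹ • (Γ x - Γ z) + Γ' x‖ := by
      have : ‖Γ x - Γ y‖⁻¹ • (Γ x - Γ y) - ‖Γ x - Γ z‖⁻¹ • (Γ x - Γ z)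
          = (‖Γ x - Γ y‖⁻¹ • (Γ x - Γ y) + Γ' x) - (‖Γ x - Γ z‖⁻¹ • (Γ x - Γ z) + Γ' x) := by
        abel
      rw [this]; exact norm_sub_le _ _
    have hpos : 0 ≤ C * (y - x) ^ α :=
      mul_nonneg hC.le (Real.rpow_nonneg hs.le α)
    calc ‖‖Γ x - Γ y‖⁻¹ • (Γ x - Γ y) - ‖Γ x - Γ z‖⁻¹ • (Γ x - Γ z)‖
        ≤ ‖‖Γ x - Γ y‖⁻¹ • (Γ x - Γ y) + Γ' x‖ + ‖‖Γ x - Γ z‖⁻¹ • (Γ x - Γ z) + Γ' x‖ := htri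
      _ ≤ 2 * (C * (y - x) ^ α) + 2 * (C * (z - x) ^ α) := add_le_add h1 h2
      _ ≤ 5 * C * (y - x) ^ α := by nlinarith
end

section
/- If Γ : S_L → ℝ³ is an injective arc-length parametrization of a curve γ with Γ ∈ C^{1,α}(S_L) where α > 1 - 2/p for some p > 2, then the Menger curvature energy M_p(γ) = ∫∫∫_{S_L³} R^{-p}(Γ(x),Γ(y),Γ(z)) dx dy dz is finite. -/
open MeasureTheory Set Real ENNReal
open scoped NNReal

/-- The Menger curvature `1/R(a,b,c) = 4·H²(conv{a,b,c})/(|a-b||b-c||a-c|)`. -/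
noncomputable def mengerCurv {n : ℕ} (a b c : EuclideanSpace ℝ (Fin n)) : ℝ :=
  4 * (μH[2] (convexHull ℝ {a, b, c})).toReal / (dist a b * dist b c * dist a c)

/-- The Menger curvature energy `M_p(γ) = ∭_{S_L³} R^{-p}(Γx, Γy, Γz) dx dy dz`. -/
noncomputable def mengerEnergy (p L : ℝ) (Γ : ℝ → EuclideanSpace ℝ (Fin 3)) : ℝ≥0∞ :=
  ∫⁻ x in Set.Ico (0 : ℝ) L, ∫⁻ y in Set.Ico (0 : ℝ) L, ∫⁻ z in Set.Ico (0 : ℝ) L,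
    ENNReal.ofReal (mengerCurv (Γ x) (Γ y) (Γ z) ^ p)

local notation "E3" => EuclideanSpace ℝ (Fin 3)

lemma mengerCurv_nonneg {n : ℕ} (a b c : EuclideanSpace ℝ (Fin n)) : 0 ≤ mengerCurv a b c := by
  apply div_nonneg <;> positivity

lemma mengerCurv_swap_left {n : ℕ} (a b c : EuclideanSpace ℝ (Fin n)) :
    mengerCurv a b c = mengerCurv b a c := by
  unfold mengerCurv
  rw [Set.insert_comm, dist_comm a b]
  ring_nf

lemma mengerCurv_swap_right {n : ℕ} (a b c : EuclideanSpace ℝ (Fin n)) :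
    mengerCurv a b c = mengerCurv a c b := by
  unfold mengerCurv
  rw [Set.pair_comm b c, dist_comm b c, dist_comm a c]
  ring_nf

lemma exists_unit_smul (v : E3) : ∃ U : E3, ‖U‖ = 1 ∧ v = ‖v‖ • U := by
  rcases eq_or_ne v 0 with h | h
  · refine ⟨EuclideanSpace.single 0 1, by simp, by simp [h]⟩
  · refine ⟨‖v‖⁻¹ • v, ?_, ?_⟩
    · rw [norm_smul, norm_inv, norm_norm, inv_mul_cancel₀ (norm_ne_zero_iff.2 h)]
    · rw [smul_smul, mul_inv_cancel₀ (norm_ne_zero_iff.2 h), one_smul]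

lemma area_le (a b c : E3) {lam : ℝ} (h0 : 0 ≤ lam) (h1 : lam ≤ 1) :
    (μH[2] (convexHull ℝ ({a, b, c} : Set E3))).toReal
      ≤ 4 * dist a c * dist b (a + lam • (c - a)) := by
  set W : E3 := a + lam • (c - a) with hWdef
  obtain ⟨U, hU1, hUv⟩ := exists_unit_smul (c - a)
  obtain ⟨V, hV1, hVv⟩ := exists_unit_smul (b - W)
  set d₁ : ℝ := dist a c with hd₁def
  set h : ℝ := dist b W with hhdef
  have hca : ‖c - a‖ = d₁ := by rw [hd₁def, dist_comm, dist_eq_norm]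
  have hbW : ‖b - W‖ = h := by rw [hhdef, dist_eq_norm]
  have hd₁0 : 0 ≤ d₁ := dist_nonneg
  have hh0 : 0 ≤ h := dist_nonneg
  let g : (Fin 2 → ℝ) →ₗ[ℝ] E3 :=
    { toFun := fun s => s 0 • U + s 1 • V
      map_add' := fun s t => by
        simp only [Pi.add_apply, add_smul]; abel
      map_smul' := fun r s => by
        simp only [Pi.smul_apply, smul_eq_mul, RingHom.id_apply, smul_add, smul_smul] }
  let f : (Fin 2 → ℝ) → E3 := fun s => a + g s
  have hf_lip : LipschitzWith 2 f := by
    apply LipschitzWith.of_dist_le_mul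
    intro s t
    have hst : f s - f t = (s 0 - t 0) • U + (s 1 - t 1) • V := by
      simp only [f, g, LinearMap.coe_mk, AddHom.coe_mk, sub_smul]
      abel
    rw [dist_eq_norm, hst]
    calc ‖(s 0 - t 0) • U + (s 1 - t 1) • V‖
        ≤ ‖(s 0 - t 0) • U‖ + ‖(s 1 - t 1) • V‖ := norm_add_le _ _
      _ = |s 0 - t 0| + |s 1 - t 1| := by
          rw [norm_smul, norm_smul, hU1, hV1, mul_one, mul_one, Real.norm_eq_abs,
            Real.norm_eq_abs]
      _ ≤ dist s t + dist s t := by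
          gcongr
          · rw [← Real.dist_eq]; exact dist_le_pi_dist s t 0
          · rw [← Real.dist_eq]; exact dist_le_pi_dist s t 1
      _ = 2 * dist s t := by ring
  have hfa : f ![0, 0] = a := by
    simp [f, g]
  have hfc : f ![d₁, 0] = c := by
    simp only [f, g, LinearMap.coe_mk, AddHom.coe_mk, Matrix.cons_val_zero, Matrix.cons_val_one,
      Matrix.head_cons, zero_smul, add_zero]
    rw [← hca, ← hUv]
    abel
  have hfb : f ![lam * d₁, h] = b := by
    simp only [f, g, LinearMap.coe_mk, AddHom.coe_mk, Matrix.cons_val_zero, Matrix.cons_val_one,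
      Matrix.head_cons]
    rw [← hbW, ← hVv, mul_smul, ← hca, ← hUv, hWdef]
    abel
  have hsub : convexHull ℝ ({a, b, c} : Set E3) ⊆ f '' (Icc 0 ![d₁, h]) := by
    apply convexHull_min
    · have hm0 : (![0, 0] : Fin 2 → ℝ) ∈ Icc (0 : Fin 2 → ℝ) ![d₁, h] := by
        constructor <;> intro i <;> fin_cases i <;> simp [hd₁0, hh0]
      have hm1 : (![d₁, 0] : Fin 2 → ℝ) ∈ Icc (0 : Fin 2 → ℝ) ![d₁, h] := by
        constructor <;> intro i <;> fin_cases i <;> simp [hd₁0, hh0]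
      have hm2 : (![lam * d₁, h] : Fin 2 → ℝ) ∈ Icc (0 : Fin 2 → ℝ) ![d₁, h] := by
        constructor <;> intro i <;> fin_cases i <;>
          simp [hd₁0, hh0, mul_nonneg h0 hd₁0]
        · nlinarith
      rintro x (rfl | rfl | rfl)
      exacts [⟨_, hm0, hfa⟩, ⟨_, hm2, hfb⟩, ⟨_, hm1, hfc⟩]
    · have himg : f '' (Icc 0 ![d₁, h]) = (fun z => a + z) '' (⇑g '' Icc 0 ![d₁, h]) := by
        rw [Set.image_image]
      rw [himg]
      exact ((convex_Icc _ _).linear_image g).translate a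
  have hpi : (μH[2] : Measure (Fin 2 → ℝ)) = volume := by
    have := MeasureTheory.hausdorffMeasure_pi_real (ι := Fin 2)
    simpa using this
  have hvol : volume (Icc (0 : Fin 2 → ℝ) ![d₁, h]) = ENNReal.ofReal d₁ * ENNReal.ofReal h := by
    rw [Real.volume_Icc_pi, Fin.prod_univ_two]
    simp
  have hmeas : μH[2] (convexHull ℝ ({a, b, c} : Set E3))
      ≤ (4 : ℝ≥0∞) * (ENNReal.ofReal d₁ * ENNReal.ofReal h) := by
    refine le_trans (measure_mono hsub) ?_
    refine le_trans (hf_lip.hausdorffMeasure_image_le (by norm_num) _) ?_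
    rw [hpi, hvol]
    gcongr
    have h4 : ((2 : ℝ≥0) : ℝ≥0∞) ^ (2 : ℝ) = 4 := by
      have h2 : ((2 : ℝ≥0) : ℝ≥0∞) = 2 := by norm_num
      rw [h2, show (2 : ℝ) = ((2 : ℕ) : ℝ) by norm_num, ENNReal.rpow_natCast]
      norm_num
    rw [h4]
  calc (μH[2] (convexHull ℝ ({a, b, c} : Set E3))).toReal
      ≤ ((4 : ℝ≥0∞) * (ENNReal.ofReal d₁ * ENNReal.ofReal h)).toReal := by
        apply ENNReal.toReal_mono _ hmeas
        finiteness
    _ = 4 * d₁ * h := by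
        rw [ENNReal.toReal_mul, ENNReal.toReal_mul, ENNReal.toReal_ofReal hd₁0,
          ENNReal.toReal_ofReal hh0]
        norm_num
        ring

lemma menger_le_far (a b c : E3) : mengerCurv a b c ≤ 32 / dist a c := by
  rcases (dist_nonneg : (0:ℝ) ≤ dist a c).eq_or_lt with hac | hac
  · unfold mengerCurv
    rw [← hac, mul_zero, _root_.div_zero]
    positivity
  rcases (dist_nonneg : (0:ℝ) ≤ dist a b).eq_or_lt with hab | hab
  · unfold mengerCurv
    rw [← hab, zero_mul, zero_mul, _root_.div_zero]
    positivity
  rcases (dist_nonneg : (0:ℝ) ≤ dist b c).eq_or_lt with hbc | hbc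
  · unfold mengerCurv
    rw [← hbc, mul_zero, zero_mul, _root_.div_zero]
    positivity
  have A1 := area_le a b c (lam := 0) le_rfl zero_le_one
  have A2 := area_le a b c (lam := 1) zero_le_one le_rfl
  simp only [zero_smul, add_zero, one_smul, add_sub_cancel] at A1 A2
  rw [dist_comm b a] at A1
  have htri : dist a c ≤ dist a b + dist b c := dist_triangle a b c
  unfold mengerCurv
  rw [div_le_div_iff₀ (by positivity) hac]
  set S := (μH[2] (convexHull ℝ ({a, b, c} : Set E3))).toReal with hS
  have hS0 : 0 ≤ S := ENNReal.toReal_nonneg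
  rcases le_total (dist a b) (dist b c) with hle | hle
  · nlinarith [mul_le_mul_of_nonneg_right A1 hac.le, mul_pos hab hbc]
  · nlinarith [mul_le_mul_of_nonneg_right A2 hac.le, mul_pos hab hbc]

section Curve

variable {αe C' : ℝ} {Γ Γ' : ℝ → E3}

lemma curve_lip (hderiv : ∀ x, HasDerivAt Γ (Γ' x) x) (hunit : ∀ x, ‖Γ' x‖ = 1)
    (s t : ℝ) : dist (Γ s) (Γ t) ≤ |s - t| := by
  rw [dist_eq_norm]
  have := convex_univ.norm_image_sub_le_of_norm_hasDerivWithin_le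
    (f := Γ) (f' := Γ') (s := (univ : Set ℝ)) (C := 1)
    (fun x _ => (hderiv x).hasDerivWithinAt) (fun x _ => le_of_eq (hunit x))
    (mem_univ t) (mem_univ s)
  simpa using this

lemma curve_taylor (hderiv : ∀ x, HasDerivAt Γ (Γ' x) x)
    (hhol : ∀ x y : ℝ, ‖Γ' x - Γ' y‖ ≤ C' * |x - y| ^ αe)
    (hC' : 0 ≤ C') (hα0 : 0 ≤ αe) {s t b : ℝ} (hst : s ≤ t) (hb : b ∈ Icc s t) :
    ‖Γ t - Γ s - (t - s) • Γ' b‖ ≤ C' * (t - s) ^ αe * (t - s) := by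
  have key : ∀ u ∈ Icc s t,
      HasDerivWithinAt (fun u => Γ u - u • Γ' b) (Γ' u - Γ' b) (Icc s t) u := by
    intro u _
    have h1 : HasDerivAt (fun u : ℝ => u • Γ' b) (Γ' b) u := by
      simpa using (hasDerivAt_id u).smul_const (Γ' b)
    exact ((hderiv u).sub h1).hasDerivWithinAt
  have bound : ∀ u ∈ Icc s t, ‖Γ' u - Γ' b‖ ≤ C' * (t - s) ^ αe := by
    intro u hu
    refine (hhol u b).trans ?_
    have h1 : |u - b| ^ αe ≤ (t - s) ^ αe := by
      apply Real.rpow_le_rpow (abs_nonneg _) _ hα0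
      rw [abs_le]
      constructor <;> [linarith [hu.1, hb.2]; linarith [hu.2, hb.1]]
    exact mul_le_mul_of_nonneg_left h1 hC'
  have hmv := convex_Icc s t |>.norm_image_sub_le_of_norm_hasDerivWithin_le key bound
    (left_mem_Icc.2 hst) (right_mem_Icc.2 hst)
  have hre : Γ t - t • Γ' b - (Γ s - s • Γ' b) = Γ t - Γ s - (t - s) • Γ' b := by
    rw [sub_smul]; abel
  rw [hre] at hmv
  refine hmv.trans ?_
  rw [Real.norm_eq_abs, abs_of_nonneg (by linarith)]

lemma curve_chord_lb (hderiv : ∀ x, HasDerivAt Γ (Γ' x) x) (hunit : ∀ x, ‖Γ' x‖ = 1)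
    (hhol : ∀ x y : ℝ, ‖Γ' x - Γ' y‖ ≤ C' * |x - y| ^ αe)
    (hC' : 0 ≤ C') (hα0 : 0 ≤ αe) {s t : ℝ} (hst : s ≤ t)
    (hsm : C' * (t - s) ^ αe ≤ 1 / 2) :
    (t - s) / 2 ≤ dist (Γ s) (Γ t) := by
  have ht := curve_taylor hderiv hhol hC' hα0 hst (left_mem_Icc.2 hst)
  have h1 : ‖(t - s) • Γ' s‖ = t - s := by
    rw [norm_smul, hunit, mul_one, Real.norm_eq_abs, abs_of_nonneg (by linarith)]
  have h2 : ‖(t - s) • Γ' s‖ - ‖Γ t - Γ s‖ ≤ ‖(t - s) • Γ' s - (Γ t - Γ s)‖ :=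
    norm_sub_norm_le _ _
  have h3 : ‖(t - s) • Γ' s - (Γ t - Γ s)‖ = ‖Γ t - Γ s - (t - s) • Γ' s‖ :=
    norm_sub_rev _ _
  have h4 : C' * (t - s) ^ αe * (t - s) ≤ 1 / 2 * (t - s) :=
    mul_le_mul_of_nonneg_right hsm (by linarith)
  rw [dist_eq_norm']
  rw [h3, h1] at h2
  linarith

lemma curve_mid (hderiv : ∀ x, HasDerivAt Γ (Γ' x) x)
    (hhol : ∀ x y : ℝ, ‖Γ' x - Γ' y‖ ≤ C' * |x - y| ^ αe)
    (hC' : 0 ≤ C') (hα0 : 0 ≤ αe) {u v w : ℝ} (huv : u ≤ v) (hvw : v ≤ w) (huw : u < w) :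
    dist (Γ v) (Γ u + ((v - u) / (w - u)) • (Γ w - Γ u))
      ≤ 2 * C' * min (v - u) (w - v) * (w - u) ^ αe := by
  have hT0 : (0:ℝ) < w - u := by linarith
  set T : ℝ := w - u with hT
  set lam : ℝ := (v - u) / T with hlam
  set mu : ℝ := (w - v) / T with hmu
  have hlam0 : 0 ≤ lam := div_nonneg (by linarith) hT0.le
  have hmu0 : 0 ≤ mu := div_nonneg (by linarith) hT0.le
  have hlamT : lam * T = v - u := div_mul_cancel₀ _ (ne_of_gt hT0)
  have hmuT : mu * T = w - v := div_mul_cancel₀ _ (ne_of_gt hT0)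
  have hP0 : 0 ≤ T ^ αe := Real.rpow_nonneg hT0.le _
  have hmono1 : (v - u) ^ αe ≤ T ^ αe :=
    Real.rpow_le_rpow (by linarith) (by rw [hT]; linarith) hα0
  have hmono2 : (w - v) ^ αe ≤ T ^ αe :=
    Real.rpow_le_rpow (by linarith) (by rw [hT]; linarith) hα0
  rcases le_total (v - u) (w - v) with hc | hc
  · rw [min_eq_left hc]
    set e1 : E3 := Γ v - Γ u - (v - u) • Γ' u with he1
    set e2 : E3 := Γ w - Γ u - T • Γ' u with he2
    have hbe1 : ‖e1‖ ≤ C' * (v - u) ^ αe * (v - u) :=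
      curve_taylor hderiv hhol hC' hα0 huv (left_mem_Icc.2 huv)
    have hbe2 : ‖e2‖ ≤ C' * T ^ αe * T :=
      curve_taylor hderiv hhol hC' hα0 (by linarith : u ≤ w)
        (left_mem_Icc.2 (by linarith))
    have hgw : lam • (Γ w - Γ u) = lam • e2 + (v - u) • Γ' u := by
      have h : Γ w - Γ u = e2 + T • Γ' u := by rw [he2]; abel
      rw [h, smul_add, smul_smul, hlamT]
    have hid : Γ v - (Γ u + lam • (Γ w - Γ u)) = e1 - lam • e2 := by
      rw [hgw, he1]; abel
    rw [dist_eq_norm, hid]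
    calc ‖e1 - lam • e2‖ ≤ ‖e1‖ + ‖lam • e2‖ := norm_sub_le _ _
      _ = ‖e1‖ + lam * ‖e2‖ := by
          rw [norm_smul, Real.norm_eq_abs, abs_of_nonneg hlam0]
      _ ≤ C' * (v - u) ^ αe * (v - u) + lam * (C' * T ^ αe * T) := by gcongr
      _ = C' * (v - u) ^ αe * (v - u) + C' * T ^ αe * (v - u) := by
          rw [show lam * (C' * T ^ αe * T) = C' * T ^ αe * (lam * T) from by ring, hlamT]
      _ ≤ C' * T ^ αe * (v - u) + C' * T ^ αe * (v - u) :=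
          add_le_add_left (mul_le_mul_of_nonneg_right
            (mul_le_mul_of_nonneg_left hmono1 hC') (by linarith)) _
      _ = 2 * C' * (v - u) * T ^ αe := by ring
  · rw [min_eq_right hc]
    set E1 : E3 := Γ w - Γ v - (w - v) • Γ' w with hE1
    set E2 : E3 := Γ w - Γ u - T • Γ' w with hE2
    have hbE1 : ‖E1‖ ≤ C' * (w - v) ^ αe * (w - v) :=
      curve_taylor hderiv hhol hC' hα0 hvw (right_mem_Icc.2 hvw)
    have hbE2 : ‖E2‖ ≤ C' * T ^ αe * T :=
      curve_taylor hderiv hhol hC' hα0 (by linarith : u ≤ w)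
        (right_mem_Icc.2 (by linarith))
    have hgw : lam • (Γ w - Γ u) = (Γ w - Γ u) - mu • E2 - (w - v) • Γ' w := by
      have hsplit : (1 - mu) • (Γ w - Γ u) = lam • (Γ w - Γ u) := by
        rw [show (1 : ℝ) - mu = lam from by
          rw [hlam, hmu]; field_simp; rw [hT]; ring]
      rw [← hsplit, sub_smul, one_smul]
      have h : Γ w - Γ u = E2 + T • Γ' w := by rw [hE2]; abel
      rw [show mu • (Γ w - Γ u) = mu • E2 + (w - v) • Γ' w from by
        rw [h, smul_add, smul_smul, hmuT]]
      abel
    have hid : Γ v - (Γ u + lam • (Γ w - Γ u)) = mu • E2 - E1 := by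
      rw [hgw, hE1]; abel
    rw [dist_eq_norm, hid]
    calc ‖mu • E2 - E1‖ ≤ ‖mu • E2‖ + ‖E1‖ := norm_sub_le _ _
      _ = mu * ‖E2‖ + ‖E1‖ := by
          rw [norm_smul, Real.norm_eq_abs, abs_of_nonneg hmu0]
      _ ≤ mu * (C' * T ^ αe * T) + C' * (w - v) ^ αe * (w - v) := by gcongr
      _ = C' * T ^ αe * (w - v) + C' * (w - v) ^ αe * (w - v) := by
          rw [show mu * (C' * T ^ αe * T) = C' * T ^ αe * (mu * T) from by ring, hmuT]
      _ ≤ C' * T ^ αe * (w - v) + C' * T ^ αe * (w - v) :=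
          add_le_add_right (mul_le_mul_of_nonneg_right
            (mul_le_mul_of_nonneg_left hmono2 hC') (by linarith)) _
      _ = 2 * C' * (w - v) * T ^ αe := by ring

lemma curve_core (hderiv : ∀ x, HasDerivAt Γ (Γ' x) x) (hunit : ∀ x, ‖Γ' x‖ = 1)
    (hhol : ∀ x y : ℝ, ‖Γ' x - Γ' y‖ ≤ C' * |x - y| ^ αe)
    (hC' : 0 < C') (hα0 : 0 ≤ αe) {u v w : ℝ} (huv : u ≤ v) (hvw : v ≤ w)
    (hsm : C' * (w - u) ^ αe ≤ 1 / 2) :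
    mengerCurv (Γ u) (Γ v) (Γ w) ≤ 256 * C' * (w - u) ^ (αe - 1) := by
  have hRHS0 : 0 ≤ 256 * C' * (w - u) ^ (αe - 1) := by
    have : (0:ℝ) ≤ (w - u) ^ (αe - 1) := Real.rpow_nonneg (by linarith) _
    positivity
  rcases eq_or_lt_of_le (show u ≤ w by linarith) with hw | hw
  · have hv : u = v := le_antisymm huv (hw ▸ hvw)
    unfold mengerCurv
    simp only [← hv, ← hw, dist_self, zero_mul, mul_zero, _root_.div_zero]
    rw [← hw] at hRHS0
    exact hRHS0
  rcases eq_or_lt_of_le huv with huv' | huv'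
  · unfold mengerCurv
    rw [← huv', dist_self, zero_mul, zero_mul, _root_.div_zero]
    exact hRHS0
  rcases eq_or_lt_of_le hvw with hvw' | hvw'
  · unfold mengerCurv
    rw [hvw', dist_self, mul_zero, zero_mul, _root_.div_zero]
    exact hRHS0
  -- now u < v < w
  have hsm1 : C' * (v - u) ^ αe ≤ 1 / 2 := by
    refine le_trans (mul_le_mul_of_nonneg_left
      (Real.rpow_le_rpow (by linarith) (by linarith) hα0) hC'.le) hsm
  have hsm2 : C' * (w - v) ^ αe ≤ 1 / 2 := by
    refine le_trans (mul_le_mul_of_nonneg_left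
      (Real.rpow_le_rpow (by linarith) (by linarith) hα0) hC'.le) hsm
  have hd1 : (v - u) / 2 ≤ dist (Γ u) (Γ v) :=
    curve_chord_lb hderiv hunit hhol hC'.le hα0 huv hsm1
  have hd2 : (w - v) / 2 ≤ dist (Γ v) (Γ w) :=
    curve_chord_lb hderiv hunit hhol hC'.le hα0 hvw hsm2
  have hd3 : (w - u) / 2 ≤ dist (Γ u) (Γ w) :=
    curve_chord_lb hderiv hunit hhol hC'.le hα0 (by linarith) hsm
  have hd1p : 0 < dist (Γ u) (Γ v) := lt_of_lt_of_le (by linarith) hd1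
  have hd2p : 0 < dist (Γ v) (Γ w) := lt_of_lt_of_le (by linarith) hd2
  have hd3p : 0 < dist (Γ u) (Γ w) := lt_of_lt_of_le (by linarith) hd3
  set lam : ℝ := (v - u) / (w - u) with hlam
  have hlam0 : 0 ≤ lam := div_nonneg (by linarith) (by linarith)
  have hlam1 : lam ≤ 1 := by
    rw [hlam, div_le_one (by linarith)]; linarith
  have harea := area_le (Γ u) (Γ v) (Γ w) hlam0 hlam1
  have hmid := curve_mid hderiv hhol hC'.le hα0 huv hvw hw
  set P : ℝ := (w - u) ^ αe with hP
  have hP0 : 0 ≤ P := Real.rpow_nonneg (by linarith) _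
  set S : ℝ := (μH[2] (convexHull ℝ ({Γ u, Γ v, Γ w} : Set E3))).toReal with hS
  have hS0 : 0 ≤ S := ENNReal.toReal_nonneg
  have hSle : S ≤ 4 * dist (Γ u) (Γ w) * (2 * C' * min (v - u) (w - v) * P) := by
    refine harea.trans ?_
    gcongr
  have hcurv : mengerCurv (Γ u) (Γ v) (Γ w)
      = 4 * S / (dist (Γ u) (Γ v) * dist (Γ v) (Γ w) * dist (Γ u) (Γ w)) := rfl
  rw [hcurv]
  have hrw : 256 * C' * (w - u) ^ (αe - 1) = 256 * C' * P / (w - u) := by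
    rw [hP, Real.rpow_sub (by linarith : (0:ℝ) < w - u), Real.rpow_one]
    ring
  rw [hrw, div_le_div_iff₀ (by positivity) (by linarith)]
  -- goal : 4 * S * (w - u) ≤ 256 * C' * P * (d1 * d2 * d3)
  have hmin : min (v - u) (w - v) * max (v - u) (w - v) = (v - u) * (w - v) :=
    min_mul_max _ _
  have hmax : (w - u) / 2 ≤ max (v - u) (w - v) := by
    rcases le_total (v - u) (w - v) with h | h
    · rw [max_eq_right h]; linarith
    · rw [max_eq_left h]; linarith
  have hminnn : 0 ≤ min (v - u) (w - v) := le_min (by linarith) (by linarith)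
  -- S * (w-u) ≤ 4 d3 * 2C' * min * P * (w-u) ≤ 4 d3 * 2C' * P * (2*max) * (min) ...
  calc 4 * S * (w - u)
      ≤ 4 * (4 * dist (Γ u) (Γ w) * (2 * C' * min (v - u) (w - v) * P)) * (w - u) :=
        mul_le_mul_of_nonneg_right (mul_le_mul_of_nonneg_left hSle (by norm_num))
          (by linarith)
    _ ≤ 4 * (4 * dist (Γ u) (Γ w) * (2 * C' * min (v - u) (w - v) * P))
          * (2 * max (v - u) (w - v)) := by
        refine mul_le_mul_of_nonneg_left (by linarith) ?_
        have h1 : (0:ℝ) ≤ 2 * C' * min (v - u) (w - v) * P :=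
          mul_nonneg (mul_nonneg (by positivity) hminnn) hP0
        positivity
    _ = 64 * C' * P * dist (Γ u) (Γ w) * ((v - u) * (w - v)) := by
        rw [← hmin]; ring
    _ ≤ 64 * C' * P * dist (Γ u) (Γ w) * ((2 * dist (Γ u) (Γ v)) * (2 * dist (Γ v) (Γ w))) := by
        gcongr <;> first | positivity | linarith
    _ = 256 * C' * P * (dist (Γ u) (Γ v) * dist (Γ v) (Γ w) * dist (Γ u) (Γ w)) := by ring

end Curve

lemma cdist_nonneg {L x y : ℝ} (hx : x ∈ Ico 0 L) (hy : y ∈ Ico 0 L) :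
    0 ≤ min |x - y| (L - |x - y|) := by
  rcases hx with ⟨hx0, hxL⟩; rcases hy with ⟨hy0, hyL⟩
  apply le_min (abs_nonneg _)
  rw [sub_nonneg, abs_le]
  constructor <;> linarith

lemma curve_sep {L δ : ℝ} {Γ : ℝ → E3} (hL : 0 < L) (hδ : 0 < δ)
    (hcont : Continuous Γ) (hper : Function.Periodic Γ L)
    (hinj : Set.InjOn Γ (Set.Ico 0 L)) :
    ∃ m : ℝ, 0 < m ∧ ∀ s t, s ∈ Icc 0 L → t ∈ Icc 0 L →
      δ ≤ min |s - t| (L - |s - t|) → m ≤ dist (Γ s) (Γ t) := by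
  set A : Set (ℝ × ℝ) := (Icc 0 L ×ˢ Icc 0 L) ∩
    {p : ℝ × ℝ | δ ≤ min |p.1 - p.2| (L - |p.1 - p.2|)} with hA
  rcases A.eq_empty_or_nonempty with hAe | hAne
  · exact ⟨1, one_pos, fun s t hs ht hd => absurd
      (show (s, t) ∈ A from ⟨⟨hs, ht⟩, hd⟩) (by simp [hAe])⟩
  have hclosed : IsClosed A := by
    apply IsClosed.inter (isClosed_Icc.prod isClosed_Icc)
    exact isClosed_le continuous_const (Continuous.min
      (continuous_fst.sub continuous_snd).abs
      (continuous_const.sub (continuous_fst.sub continuous_snd).abs))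
  have hAc : IsCompact A :=
    (isCompact_Icc.prod isCompact_Icc).of_isClosed_subset hclosed inter_subset_left
  have hf : Continuous fun p : ℝ × ℝ => dist (Γ p.1) (Γ p.2) :=
    (hcont.comp continuous_fst).dist (hcont.comp continuous_snd)
  obtain ⟨p₀, hp₀, hmin⟩ := hAc.exists_isMinOn hAne hf.continuousOn
  refine ⟨dist (Γ p₀.1) (Γ p₀.2), ?_,
    fun s t hs ht hd => isMinOn_iff.1 hmin (s, t) ⟨⟨hs, ht⟩, hd⟩⟩
  rw [dist_pos]
  obtain ⟨⟨hs₀, ht₀⟩, hd₀⟩ := hp₀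
  set s₀ := p₀.1
  set t₀ := p₀.2
  have hΓL : Γ L = Γ 0 := by simpa using hper 0
  set s₁ : ℝ := if s₀ = L then 0 else s₀ with hs₁
  set t₁ : ℝ := if t₀ = L then 0 else t₀ with ht₁
  have hΓs : Γ s₁ = Γ s₀ := by
    rw [hs₁]; split_ifs with h
    · rw [h, hΓL]
    · rfl
  have hΓt : Γ t₁ = Γ t₀ := by
    rw [ht₁]; split_ifs with h
    · rw [h, hΓL]
    · rfl
  have hs₁m : s₁ ∈ Ico 0 L := by
    rw [hs₁]; split_ifs with h
    · exact ⟨le_rfl, hL⟩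
    · exact ⟨hs₀.1, lt_of_le_of_ne hs₀.2 h⟩
  have ht₁m : t₁ ∈ Ico 0 L := by
    rw [ht₁]; split_ifs with h
    · exact ⟨le_rfl, hL⟩
    · exact ⟨ht₀.1, lt_of_le_of_ne ht₀.2 h⟩
  intro hcontr
  have hd₀' : δ ≤ min |s₀ - t₀| (L - |s₀ - t₀|) := hd₀
  have heq : s₁ = t₁ := hinj hs₁m ht₁m (by rw [hΓs, hΓt, hcontr])
  rw [hs₁, ht₁] at heq
  split_ifs at heq with h1 h2 h2
  · have h := le_trans hd₀' (min_le_left _ _)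
    rw [h1, h2, sub_self, abs_zero] at h
    linarith
  · have h := le_trans hd₀' (min_le_right _ _)
    rw [h1, ← heq, sub_zero, abs_of_nonneg hL.le] at h
    linarith
  · have h := le_trans hd₀' (min_le_right _ _)
    rw [heq, h2, zero_sub, abs_neg, abs_of_nonneg hL.le] at h
    linarith
  · have h := le_trans hd₀' (min_le_left _ _)
    rw [heq, sub_self, abs_zero] at h
    linarith

lemma mengerCurv_rot {n : ℕ} (a b c : EuclideanSpace ℝ (Fin n)) :
    mengerCurv a b c = mengerCurv b c a := by
  rw [mengerCurv_swap_left, mengerCurv_swap_right]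

lemma shift_sorted {L δ : ℝ} {Γ : ℝ → E3} (hL : 0 < L) (hδ : 0 ≤ δ)
    (hper : Function.Periodic Γ L)
    {x y z : ℝ} (hx : x ∈ Ico 0 L) (hy : y ∈ Ico 0 L) (hz : z ∈ Ico 0 L)
    (hxy : x ≤ y) (hyz : y ≤ z)
    (dxy : min |x - y| (L - |x - y|) ≤ δ)
    (dyz : min |y - z| (L - |y - z|) ≤ δ)
    (dxz : min |x - z| (L - |x - z|) ≤ δ) :
    ∃ u v w, u ≤ v ∧ v ≤ w ∧ w - u ≤ 2 * δ ∧
      min |x - y| (L - |x - y|) ≤ w - u ∧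
      min |y - z| (L - |y - z|) ≤ w - u ∧
      min |x - z| (L - |x - z|) ≤ w - u ∧
      mengerCurv (Γ u) (Γ v) (Γ w) = mengerCurv (Γ x) (Γ y) (Γ z) := by
  have haxy : |x - y| = y - x := by rw [abs_sub_comm, abs_of_nonneg (by linarith)]
  have hayz : |y - z| = z - y := by rw [abs_sub_comm, abs_of_nonneg (by linarith)]
  have haxz : |x - z| = z - x := by rw [abs_sub_comm, abs_of_nonneg (by linarith)]
  by_cases h2 : z - x ≤ 2 * δ
  · refine ⟨x, y, z, hxy, hyz, h2, ?_, ?_, ?_, rfl⟩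
    · exact le_trans (min_le_left _ _) (by rw [haxy]; linarith)
    · exact le_trans (min_le_left _ _) (by rw [hayz]; linarith)
    · exact le_trans (min_le_left _ _) (le_of_eq haxz)
  push_neg at h2
  by_cases hyx : δ < y - x
  · have hL1 : L - (y - x) ≤ δ := by
      rcases min_le_iff.1 dxy with h | h
      · rw [haxy] at h; linarith
      · rw [haxy] at h; linarith
    refine ⟨y, z, x + L, hyz, by linarith [hz.2, hx.1], by linarith, ?_, ?_, ?_, ?_⟩
    · exact le_trans (min_le_right _ _) (by rw [haxy]; linarith)
    · exact le_trans (min_le_left _ _) (by rw [hayz]; linarith [hz.2, hx.1])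
    · exact le_trans (min_le_right _ _) (by rw [haxz]; linarith)
    · rw [hper x]
      exact (mengerCurv_rot (Γ y) (Γ z) (Γ x)).trans (mengerCurv_rot (Γ z) (Γ x) (Γ y))
  · push_neg at hyx
    have hzy : δ < z - y := by linarith
    have hL2 : L - (z - y) ≤ δ := by
      rcases min_le_iff.1 dyz with h | h
      · rw [hayz] at h; linarith
      · rw [hayz] at h; linarith
    refine ⟨z, x + L, y + L, by linarith [hz.2, hx.1], by linarith, by linarith,
      ?_, ?_, ?_, ?_⟩
    · exact le_trans (min_le_left _ _) (by rw [haxy]; linarith [hz.2, hx.1])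
    · exact le_trans (min_le_right _ _) (by rw [hayz]; linarith)
    · exact le_trans (min_le_right _ _) (by rw [haxz]; linarith)
    · rw [hper x, hper y]
      exact mengerCurv_rot (Γ z) (Γ x) (Γ y)

noncomputable def cD (L a b c : ℝ) : ℝ :=
  max (max (min |a - b| (L - |a - b|)) (min |b - c| (L - |b - c|)))
    (min |a - c| (L - |a - c|))

lemma cD_swap_left (L a b c : ℝ) : cD L a b c = cD L b a c := by
  unfold cD
  rw [abs_sub_comm a b]
  simp [max_comm, max_left_comm, max_assoc]

lemma cD_swap_right (L a b c : ℝ) : cD L a b c = cD L a c b := by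
  unfold cD
  rw [abs_sub_comm b c]
  simp [max_comm, max_left_comm, max_assoc]

lemma cD_rot (L a b c : ℝ) : cD L a b c = cD L b c a := by
  rw [cD_swap_left, cD_swap_right]

lemma pt_bound_sorted {L δ m αe C' : ℝ} {Γ Γ' : ℝ → E3}
    (hL : 0 < L) (hδ : 0 < δ)
    (hderiv : ∀ x, HasDerivAt Γ (Γ' x) x) (hunit : ∀ x, ‖Γ' x‖ = 1)
    (hhol : ∀ x y : ℝ, ‖Γ' x - Γ' y‖ ≤ C' * |x - y| ^ αe)
    (hper : Function.Periodic Γ L)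
    (hC' : 0 < C') (hα0 : 0 ≤ αe) (hα1 : αe ≤ 1)
    (hsm : C' * (2 * δ) ^ αe ≤ 1 / 2)
    (hm : 0 < m)
    (hsep : ∀ s t, s ∈ Icc 0 L → t ∈ Icc 0 L →
      δ ≤ min |s - t| (L - |s - t|) → m ≤ dist (Γ s) (Γ t))
    {x y z : ℝ} (hx : x ∈ Ico 0 L) (hy : y ∈ Ico 0 L) (hz : z ∈ Ico 0 L)
    (hxy : x ≤ y) (hyz : y ≤ z) :
    mengerCurv (Γ x) (Γ y) (Γ z) ≤ 32 / m + 256 * C' * cD L x y z ^ (αe - 1) := by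
  set cxy : ℝ := min |x - y| (L - |x - y|) with hcxy
  set cyz : ℝ := min |y - z| (L - |y - z|) with hcyz
  set cxz : ℝ := min |x - z| (L - |x - z|) with hcxz
  have hDD : cD L x y z = max (max cxy cyz) cxz := rfl
  set D : ℝ := max (max cxy cyz) cxz with hD
  rw [hDD]
  have hD0 : 0 ≤ D :=
    le_trans (cdist_nonneg hx hz) (le_max_right _ _)
  have hterm2 : 0 ≤ 256 * C' * D ^ (αe - 1) := by
    have := Real.rpow_nonneg hD0 (αe - 1)
    positivity
  have hterm1 : 0 ≤ 32 / m := div_nonneg (by norm_num) hm.le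
  by_cases h1 : x = z
  · have hxyeq : x = y := le_antisymm hxy (h1 ▸ hyz)
    unfold mengerCurv
    rw [← hxyeq, dist_self, zero_mul, zero_mul, _root_.div_zero]
    linarith
  have hxz : x < z := lt_of_le_of_ne (hxy.trans hyz) h1
  have hcxz0 : 0 < cxz := by
    rw [hcxz]
    apply lt_min
    · rw [abs_sub_comm, abs_of_nonneg (by linarith)]; linarith
    · rw [abs_sub_comm, abs_of_nonneg (by linarith)]
      have := hz.2; have := hx.1; linarith
  have hD0' : 0 < D := lt_of_lt_of_le hcxz0 (le_max_right _ _)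
  by_cases hall : cxy ≤ δ ∧ cyz ≤ δ ∧ cxz ≤ δ
  · obtain ⟨u, v, w, huv, hvw, h2δ, hd1, hd2, hd3, hcurv⟩ :=
      shift_sorted hL hδ.le hper hx hy hz hxy hyz hall.1 hall.2.1 hall.2.2
    have hwusm : C' * (w - u) ^ αe ≤ 1 / 2 :=
      le_trans (mul_le_mul_of_nonneg_left
        (Real.rpow_le_rpow (by linarith) h2δ hα0) hC'.le) hsm
    have hcore := curve_core hderiv hunit hhol hC' hα0 huv hvw hwusm
    rw [← hcurv]
    refine le_trans hcore ?_
    have hDle : D ≤ w - u := max_le (max_le hd1 hd2) hd3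
    have hr : (w - u) ^ (αe - 1) ≤ D ^ (αe - 1) :=
      Real.rpow_le_rpow_of_nonpos hD0' hDle (by linarith)
    have h256 : 256 * C' * (w - u) ^ (αe - 1) ≤ 256 * C' * D ^ (αe - 1) :=
      mul_le_mul_of_nonneg_left hr (by positivity)
    linarith
  · have hone : δ < cxy ∨ δ < cyz ∨ δ < cxz := by
      by_contra hcon
      push_neg at hcon
      exact hall ⟨hcon.1, hcon.2.1, hcon.2.2⟩
    have hfin : ∀ s t : ℝ, m ≤ dist (Γ s) (Γ t) → 32 / dist (Γ s) (Γ t) ≤ 32 / m := by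
      intro s t hst
      gcongr
    rcases hone with h | h | h
    · have hdist := hsep x y (Ico_subset_Icc_self hx) (Ico_subset_Icc_self hy) h.le
      have hfar : mengerCurv (Γ x) (Γ y) (Γ z) ≤ 32 / dist (Γ x) (Γ y) := by
        rw [mengerCurv_swap_right]
        exact menger_le_far (Γ x) (Γ z) (Γ y)
      linarith [hfar.trans (hfin x y hdist)]
    · have hdist := hsep y z (Ico_subset_Icc_self hy) (Ico_subset_Icc_self hz) h.le
      have hfar : mengerCurv (Γ x) (Γ y) (Γ z) ≤ 32 / dist (Γ y) (Γ z) := by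
        rw [mengerCurv_swap_left]
        exact menger_le_far (Γ y) (Γ x) (Γ z)
      linarith [hfar.trans (hfin y z hdist)]
    · have hdist := hsep x z (Ico_subset_Icc_self hx) (Ico_subset_Icc_self hz) h.le
      have hfar : mengerCurv (Γ x) (Γ y) (Γ z) ≤ 32 / dist (Γ x) (Γ z) :=
        menger_le_far (Γ x) (Γ y) (Γ z)
      linarith [hfar.trans (hfin x z hdist)]

lemma pt_bound {L δ m αe C' : ℝ} {Γ Γ' : ℝ → E3}
    (hL : 0 < L) (hδ : 0 < δ)
    (hderiv : ∀ x, HasDerivAt Γ (Γ' x) x) (hunit : ∀ x, ‖Γ' x‖ = 1)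
    (hhol : ∀ x y : ℝ, ‖Γ' x - Γ' y‖ ≤ C' * |x - y| ^ αe)
    (hper : Function.Periodic Γ L)
    (hC' : 0 < C') (hα0 : 0 ≤ αe) (hα1 : αe ≤ 1)
    (hsm : C' * (2 * δ) ^ αe ≤ 1 / 2)
    (hm : 0 < m)
    (hsep : ∀ s t, s ∈ Icc 0 L → t ∈ Icc 0 L →
      δ ≤ min |s - t| (L - |s - t|) → m ≤ dist (Γ s) (Γ t))
    {x y z : ℝ} (hx : x ∈ Ico 0 L) (hy : y ∈ Ico 0 L) (hz : z ∈ Ico 0 L) :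
    mengerCurv (Γ x) (Γ y) (Γ z) ≤ 32 / m + 256 * C' * cD L x y z ^ (αe - 1) := by
  have base := fun {a b c : ℝ} (ha : a ∈ Ico 0 L) (hb : b ∈ Ico 0 L) (hc : c ∈ Ico 0 L)
    (hab : a ≤ b) (hbc : b ≤ c) =>
    pt_bound_sorted hL hδ hderiv hunit hhol hper hC' hα0 hα1 hsm hm hsep ha hb hc hab hbc
  rcases le_total x y with hxy | hxy
  · rcases le_total y z with hyz | hyz
    · exact base hx hy hz hxy hyz
    · rcases le_total x z with hxz | hxz
      · calc mengerCurv (Γ x) (Γ y) (Γ z) = mengerCurv (Γ x) (Γ z) (Γ y) :=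
            mengerCurv_swap_right _ _ _
          _ ≤ 32 / m + 256 * C' * cD L x z y ^ (αe - 1) := base hx hz hy hxz hyz
          _ = 32 / m + 256 * C' * cD L x y z ^ (αe - 1) := by
            rw [← cD_swap_right L x y z]
      · calc mengerCurv (Γ x) (Γ y) (Γ z) = mengerCurv (Γ z) (Γ x) (Γ y) :=
            (mengerCurv_rot (Γ z) (Γ x) (Γ y)).symm
          _ ≤ 32 / m + 256 * C' * cD L z x y ^ (αe - 1) := base hz hx hy hxz hxy
          _ = 32 / m + 256 * C' * cD L x y z ^ (αe - 1) := by
            rw [cD_rot L z x y]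
  · rcases le_total x z with hxz | hxz
    · calc mengerCurv (Γ x) (Γ y) (Γ z) = mengerCurv (Γ y) (Γ x) (Γ z) :=
          mengerCurv_swap_left _ _ _
        _ ≤ 32 / m + 256 * C' * cD L y x z ^ (αe - 1) := base hy hx hz hxy hxz
        _ = 32 / m + 256 * C' * cD L x y z ^ (αe - 1) := by
          rw [← cD_swap_left L x y z]
    · rcases le_total y z with hyz | hyz
      · calc mengerCurv (Γ x) (Γ y) (Γ z) = mengerCurv (Γ y) (Γ z) (Γ x) :=
            mengerCurv_rot _ _ _
          _ ≤ 32 / m + 256 * C' * cD L y z x ^ (αe - 1) := base hy hz hx hyz hxz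
          _ = 32 / m + 256 * C' * cD L x y z ^ (αe - 1) := by
            rw [← cD_rot L x y z]
      · calc mengerCurv (Γ x) (Γ y) (Γ z) = mengerCurv (Γ z) (Γ y) (Γ x) :=
            (mengerCurv_rot (Γ x) (Γ y) (Γ z)).trans
              (mengerCurv_swap_left (Γ y) (Γ z) (Γ x))
          _ ≤ 32 / m + 256 * C' * cD L z y x ^ (αe - 1) := base hz hy hx hyz hxy
          _ = 32 / m + 256 * C' * cD L x y z ^ (αe - 1) := by
            rw [cD_rot L x y z, cD_swap_left L y z x]

lemma lint_abs_rpow_le {L : ℝ} (q : ℝ) (hL : 0 < L) (c : ℝ) (hc1 : -L ≤ c) (hc2 : c ≤ 2 * L) :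
    ∫⁻ t in Ico (0:ℝ) L, ENNReal.ofReal (|t - c| ^ q)
      ≤ ∫⁻ u in Icc (-(2*L)) (2*L),
          (ENNReal.ofReal (u ^ q) + ENNReal.ofReal ((-u) ^ q)) := by
  rw [← lintegral_indicator measurableSet_Ico, ← lintegral_indicator measurableSet_Icc]
  have key : ∀ u : ℝ,
      (Ico (0:ℝ) L).indicator (fun t => ENNReal.ofReal (|t - c| ^ q)) (u + c)
      ≤ (Icc (-(2*L)) (2*L)).indicator
          (fun u => ENNReal.ofReal (u ^ q) + ENNReal.ofReal ((-u) ^ q)) u := by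
    intro u
    by_cases h : u + c ∈ Ico (0:ℝ) L
    · rw [Set.indicator_of_mem h]
      have hu : u ∈ Icc (-(2*L)) (2*L) := ⟨by linarith [h.1], by linarith [h.2.le]⟩
      rw [Set.indicator_of_mem hu]
      have habs : |u + c - c| = |u| := by rw [add_sub_cancel_right]
      rw [habs]
      rcases le_total 0 u with hu0 | hu0
      · rw [abs_of_nonneg hu0]
        exact le_add_of_nonneg_right zero_le
      · rw [abs_of_nonpos hu0]
        exact le_add_of_nonneg_left zero_le
    · rw [Set.indicator_of_notMem h]
      exact zero_le
  calc ∫⁻ t, (Ico (0:ℝ) L).indicator (fun t => ENNReal.ofReal (|t - c| ^ q)) t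
      = ∫⁻ u, (Ico (0:ℝ) L).indicator (fun t => ENNReal.ofReal (|t - c| ^ q)) (u + c) :=
        (lintegral_add_right_eq_self _ c).symm
    _ ≤ _ := lintegral_mono key

lemma J_lt_top {L q : ℝ} (hL : 0 < L) (hq : -1 < q) :
    ∫⁻ u in Icc (-(2*L)) (2*L),
      (ENNReal.ofReal (u ^ q) + ENNReal.ofReal ((-u) ^ q)) < ⊤ := by
  have h1 : IntegrableOn (fun u : ℝ => u ^ q) (Icc (-(2*L)) (2*L)) := by
    rw [integrableOn_Icc_iff_integrableOn_Ioc]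
    exact (intervalIntegrable_iff_integrableOn_Ioc_of_le (by linarith)).1
      (intervalIntegral.intervalIntegrable_rpow' hq)
  have h2 : IntegrableOn (fun u : ℝ => (-u) ^ q) (Icc (-(2*L)) (2*L)) := by
    have hii := intervalIntegral.intervalIntegrable_rpow' (a := 2*L) (b := -(2*L)) hq
    rw [IntervalIntegrable.iff_comp_neg] at hii
    rw [integrableOn_Icc_iff_integrableOn_Ioc]
    simp only [neg_neg] at hii
    exact (intervalIntegrable_iff_integrableOn_Ioc_of_le (by linarith)).1 hii
  have hF : IntegrableOn (fun u : ℝ => |u ^ q| + |(-u) ^ q|) (Icc (-(2*L)) (2*L)) :=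
    h1.abs.add h2.abs
  refine lt_of_le_of_lt (lintegral_mono fun u => ?_) hF.hasFiniteIntegral
  have hnn : (0:ℝ) ≤ |u ^ q| + |(-u) ^ q| := by positivity
  calc ENNReal.ofReal (u ^ q) + ENNReal.ofReal ((-u) ^ q)
      ≤ ENNReal.ofReal |u ^ q| + ENNReal.ofReal |(-u) ^ q| := by
        gcongr <;> exact le_abs_self _
    _ = ENNReal.ofReal (|u ^ q| + |(-u) ^ q|) := (ENNReal.ofReal_add (abs_nonneg _) (abs_nonneg _)).symm
    _ ≤ ↑‖|u ^ q| + |(-u) ^ q|‖₊ := by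
        rw [← enorm_eq_nnnorm, ← ofReal_norm_eq_enorm, Real.norm_eq_abs, abs_of_nonneg hnn]

lemma psi_int {L q : ℝ} (hL : 0 < L) (hq : -1 < q) {x : ℝ} (hx : x ∈ Ico 0 L) :
    ∫⁻ t in Ico (0:ℝ) L, ENNReal.ofReal ((min |x - t| (L - |x - t|)) ^ q)
      ≤ 3 * ∫⁻ u in Icc (-(2*L)) (2*L),
          (ENNReal.ofReal (u ^ q) + ENNReal.ofReal ((-u) ^ q)) := by
  set J := ∫⁻ u in Icc (-(2*L)) (2*L),
    (ENNReal.ofReal (u ^ q) + ENNReal.ofReal ((-u) ^ q)) with hJ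
  have hpt : ∀ t ∈ Ico (0:ℝ) L,
      ENNReal.ofReal ((min |x - t| (L - |x - t|)) ^ q)
        ≤ ENNReal.ofReal (|t - x| ^ q) +
          (ENNReal.ofReal (|t - (x + L)| ^ q) + ENNReal.ofReal (|t - (x - L)| ^ q)) := by
    intro t ht
    have htx : |t - x| ≤ L := by
      rw [abs_le]
      constructor <;> [linarith [ht.1, hx.2.le]; linarith [ht.2.le, hx.1]]
    have ha1 : |t - (x + L)| = L - (t - x) := by
      rw [abs_of_nonpos (by linarith [abs_le.1 htx])]
      ring
    have ha2 : |t - (x - L)| = L + (t - x) := by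
      rw [abs_of_nonneg (by linarith [(abs_le.1 htx).1])]
      ring
    have hmin : min |x - t| (L - |x - t|)
        = min |t - x| (min |t - (x + L)| |t - (x - L)|) := by
      rw [abs_sub_comm x t, ha1, ha2]
      congr 1
      rcases le_total 0 (t - x) with h0 | h0
      · rw [abs_of_nonneg h0, min_eq_left (by linarith)]
      · rw [abs_of_nonpos h0, min_eq_right (by linarith)]
        ring
    rw [hmin]
    rcases min_cases |t - x| (min |t - (x + L)| |t - (x - L)|) with ⟨he, _⟩ | ⟨he, _⟩
    · rw [he]
      exact le_add_of_nonneg_right zero_le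
    · rw [he]
      rcases min_cases |t - (x + L)| |t - (x - L)| with ⟨he2, _⟩ | ⟨he2, _⟩
      · rw [he2]
        calc ENNReal.ofReal (|t - (x + L)| ^ q)
            ≤ ENNReal.ofReal (|t - (x + L)| ^ q) + ENNReal.ofReal (|t - (x - L)| ^ q) :=
              le_add_of_nonneg_right zero_le
          _ ≤ _ := le_add_of_nonneg_left zero_le
      · rw [he2]
        calc ENNReal.ofReal (|t - (x - L)| ^ q)
            ≤ ENNReal.ofReal (|t - (x + L)| ^ q) + ENNReal.ofReal (|t - (x - L)| ^ q) :=
              le_add_of_nonneg_left zero_le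
          _ ≤ _ := le_add_of_nonneg_left zero_le
  calc ∫⁻ t in Ico (0:ℝ) L, ENNReal.ofReal ((min |x - t| (L - |x - t|)) ^ q)
      ≤ ∫⁻ t in Ico (0:ℝ) L, (ENNReal.ofReal (|t - x| ^ q) +
          (ENNReal.ofReal (|t - (x + L)| ^ q) + ENNReal.ofReal (|t - (x - L)| ^ q))) :=
        setLIntegral_mono' measurableSet_Ico hpt
    _ = (∫⁻ t in Ico (0:ℝ) L, ENNReal.ofReal (|t - x| ^ q)) +
        ((∫⁻ t in Ico (0:ℝ) L, ENNReal.ofReal (|t - (x + L)| ^ q)) +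
         (∫⁻ t in Ico (0:ℝ) L, ENNReal.ofReal (|t - (x - L)| ^ q))) := by
        rw [lintegral_add_left (by fun_prop), lintegral_add_left (by fun_prop)]
    _ ≤ J + (J + J) := by
        gcongr
        · exact lint_abs_rpow_le q hL x (by linarith [hx.1]) (by linarith [hx.2.le])
        · exact lint_abs_rpow_le q hL (x + L) (by linarith [hx.1]) (by linarith [hx.2.le])
        · exact lint_abs_rpow_le q hL (x - L) (by linarith [hx.1]) (by linarith [hx.2.le])
    _ = 3 * J := by ring

lemma pt_bound_ennreal {L δ m αe C' p : ℝ} {Γ Γ' : ℝ → E3}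
    (hL : 0 < L) (hδ : 0 < δ)
    (hderiv : ∀ x, HasDerivAt Γ (Γ' x) x) (hunit : ∀ x, ‖Γ' x‖ = 1)
    (hhol : ∀ x y : ℝ, ‖Γ' x - Γ' y‖ ≤ C' * |x - y| ^ αe)
    (hper : Function.Periodic Γ L)
    (hC' : 0 < C') (hα0 : 0 ≤ αe) (hα1 : αe ≤ 1)
    (hsm : C' * (2 * δ) ^ αe ≤ 1 / 2)
    (hm : 0 < m)
    (hsep : ∀ s t, s ∈ Icc 0 L → t ∈ Icc 0 L →
      δ ≤ min |s - t| (L - |s - t|) → m ≤ dist (Γ s) (Γ t))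
    (hp : 0 < p)
    {x y z : ℝ} (hx : x ∈ Ico 0 L) (hy : y ∈ Ico 0 L) (hz : z ∈ Ico 0 L) :
    ENNReal.ofReal (mengerCurv (Γ x) (Γ y) (Γ z) ^ p) ≤
      ENNReal.ofReal ((2:ℝ) ^ p * (32 / m) ^ p) +
      ENNReal.ofReal ((2:ℝ) ^ p * (256 * C') ^ p) *
        (ENNReal.ofReal (min |x - y| (L - |x - y|) ^ ((αe - 1) * p / 2)) *
         ENNReal.ofReal (min |x - z| (L - |x - z|) ^ ((αe - 1) * p / 2))) := by
  set q : ℝ := (αe - 1) * p / 2 with hqdef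
  have hq0 : q ≤ 0 := by
    rw [hqdef]
    apply div_nonpos_of_nonpos_of_nonneg _ (by norm_num)
    exact mul_nonpos_of_nonpos_of_nonneg (by linarith) hp.le
  by_cases hdeg : x = y ∨ x = z
  · have hcv : mengerCurv (Γ x) (Γ y) (Γ z) = 0 := by
      rcases hdeg with h | h
      · unfold mengerCurv
        rw [← h, dist_self, zero_mul, zero_mul, _root_.div_zero]
      · unfold mengerCurv
        rw [← h, dist_self, mul_zero, _root_.div_zero]
    rw [hcv, Real.zero_rpow hp.ne']
    simp
  · push_neg at hdeg
    set cxy : ℝ := min |x - y| (L - |x - y|) with hcxy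
    set cxz : ℝ := min |x - z| (L - |x - z|) with hcxz
    have habs : ∀ {a b : ℝ}, a ∈ Ico 0 L → b ∈ Ico 0 L → a ≠ b →
        0 < min |a - b| (L - |a - b|) := by
      intro a b ha hb hab
      apply lt_min (abs_pos.2 (sub_ne_zero.2 hab))
      rw [sub_pos, abs_lt]
      constructor <;> [linarith [ha.1, hb.2]; linarith [ha.2, hb.1]]
    have hcxy0 : 0 < cxy := habs hx hy hdeg.1
    have hcxz0 : 0 < cxz := habs hx hz hdeg.2
    have hb := pt_bound hL hδ hderiv hunit hhol hper hC' hα0 hα1 hsm hm hsep hx hy hz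
    set D : ℝ := cD L x y z with hDdef
    have hDxy : cxy ≤ D := le_trans (le_max_left _ _) (le_max_left _ _)
    have hDxz : cxz ≤ D := le_max_right _ _
    have hD0 : 0 < D := lt_of_lt_of_le hcxy0 hDxy
    set A : ℝ := 32 / m with hA
    set B : ℝ := 256 * C' * D ^ (αe - 1) with hB
    have hA0 : 0 ≤ A := div_nonneg (by norm_num) hm.le
    have hB0 : 0 ≤ B := by
      have := Real.rpow_nonneg hD0.le (αe - 1)
      positivity
    have hcurv0 : 0 ≤ mengerCurv (Γ x) (Γ y) (Γ z) := mengerCurv_nonneg _ _ _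
    -- real inequality
    have hmaxp : (max A B) ^ p ≤ A ^ p + B ^ p := by
      rcases max_cases A B with ⟨he, _⟩ | ⟨he, _⟩
      · rw [he]
        exact le_add_of_nonneg_right (Real.rpow_nonneg hB0 _)
      · rw [he]
        exact le_add_of_nonneg_left (Real.rpow_nonneg hA0 _)
    have hABp : (A + B) ^ p ≤ 2 ^ p * (A ^ p + B ^ p) := by
      calc (A + B) ^ p ≤ (2 * max A B) ^ p := by
            apply Real.rpow_le_rpow (by positivity) _ hp.le
            rcases le_total A B with h | h
            · rw [max_eq_right h]; linarith
            · rw [max_eq_left h]; linarith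
        _ = 2 ^ p * (max A B) ^ p :=
            Real.mul_rpow (by norm_num) (le_max_of_le_left hA0)
        _ ≤ 2 ^ p * (A ^ p + B ^ p) := by
            apply mul_le_mul_of_nonneg_left hmaxp (Real.rpow_nonneg (by norm_num) _)
    have hBp : B ^ p = (256 * C') ^ p * (D ^ (αe - 1)) ^ p :=
      Real.mul_rpow (by positivity) (Real.rpow_nonneg hD0.le _)
    have hDp : (D ^ (αe - 1)) ^ p = D ^ q * D ^ q := by
      rw [← Real.rpow_mul hD0.le, ← Real.rpow_add hD0]
      congr 1
      rw [hqdef]; ring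
    have hDq : D ^ q * D ^ q ≤ cxy ^ q * cxz ^ q := by
      apply mul_le_mul (Real.rpow_le_rpow_of_nonpos hcxy0 hDxy hq0)
        (Real.rpow_le_rpow_of_nonpos hcxz0 hDxz hq0)
        (Real.rpow_nonneg hD0.le _) (Real.rpow_nonneg hcxy0.le _)
    have hreal : mengerCurv (Γ x) (Γ y) (Γ z) ^ p
        ≤ 2 ^ p * A ^ p + 2 ^ p * (256 * C') ^ p * (cxy ^ q * cxz ^ q) := by
      calc mengerCurv (Γ x) (Γ y) (Γ z) ^ p ≤ (A + B) ^ p :=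
            Real.rpow_le_rpow hcurv0 hb hp.le
        _ ≤ 2 ^ p * (A ^ p + B ^ p) := hABp
        _ = 2 ^ p * A ^ p + 2 ^ p * ((256 * C') ^ p * (D ^ q * D ^ q)) := by
            rw [hBp, hDp]; ring
        _ ≤ 2 ^ p * A ^ p + 2 ^ p * ((256 * C') ^ p * (cxy ^ q * cxz ^ q)) := by
            have h2p : (0:ℝ) ≤ 2 ^ p := Real.rpow_nonneg (by norm_num) _
            have h256 : (0:ℝ) ≤ (256 * C') ^ p := Real.rpow_nonneg (by positivity) _
            nlinarith [mul_le_mul_of_nonneg_left hDq h256]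
        _ = 2 ^ p * A ^ p + 2 ^ p * (256 * C') ^ p * (cxy ^ q * cxz ^ q) := by ring
    calc ENNReal.ofReal (mengerCurv (Γ x) (Γ y) (Γ z) ^ p)
        ≤ ENNReal.ofReal (2 ^ p * A ^ p + 2 ^ p * (256 * C') ^ p * (cxy ^ q * cxz ^ q)) :=
          ENNReal.ofReal_le_ofReal hreal
      _ = ENNReal.ofReal (2 ^ p * A ^ p)
          + ENNReal.ofReal (2 ^ p * (256 * C') ^ p * (cxy ^ q * cxz ^ q)) := by
          apply ENNReal.ofReal_add
          · have := Real.rpow_nonneg hA0 p; positivity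
          · have h1 := Real.rpow_nonneg (show (0:ℝ) ≤ 256 * C' by positivity) p
            have h2 := Real.rpow_nonneg hcxy0.le q
            have h3 := Real.rpow_nonneg hcxz0.le q
            have h4 := Real.rpow_nonneg (show (0:ℝ) ≤ 2 by norm_num) p
            positivity
      _ ≤ _ := by
          apply add_le_add
          · apply ENNReal.ofReal_le_ofReal
            apply mul_le_mul_of_nonneg_left _ (Real.rpow_nonneg (by norm_num) _)
            apply Real.rpow_le_rpow hA0 le_rfl hp.le
          · rw [ENNReal.ofReal_mul (by
              have h4 := Real.rpow_nonneg (show (0:ℝ) ≤ 2 by norm_num) p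
              have h1 := Real.rpow_nonneg (show (0:ℝ) ≤ 256 * C' by positivity) p
              positivity), ENNReal.ofReal_mul (Real.rpow_nonneg hcxy0.le q)]

/-- If `Γ : S_L → ℝ³` is an injective arc-length parametrization of
class `C^{1,α}` with `α > 1 - 2/p` for some `p > 2`, then `M_p(γ) < ∞`. -/
theorem mengerEnergy_lt_top_of_C1alpha (L : ℝ) (hL : 0 < L) (p α C : ℝ)
    (hp : 2 < p) (hα : 1 - 2 / p < α) (hα1 : α ≤ 1)
    (Γ Γ' : ℝ → EuclideanSpace ℝ (Fin 3))
    (hper : Function.Periodic Γ L)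
    (hinj : Set.InjOn Γ (Set.Ico 0 L))
    (hderiv : ∀ x, HasDerivAt Γ (Γ' x) x)
    (hunit : ∀ x, ‖Γ' x‖ = 1)
    (hhol : ∀ x y : ℝ, ‖Γ' x - Γ' y‖ ≤ C * |x - y| ^ α) :
    mengerEnergy p L Γ < ⊤ := by
  have hp0 : 0 < p := by linarith
  have hα0 : 0 < α := by
    have h2p : 2 / p < 1 := by rw [div_lt_one hp0]; linarith
    linarith
  set C' : ℝ := |C| + 1 with hC'def
  have hC'0 : 0 < C' := by positivity
  have hhol' : ∀ x y : ℝ, ‖Γ' x - Γ' y‖ ≤ C' * |x - y| ^ α := fun x y =>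
    (hhol x y).trans (mul_le_mul_of_nonneg_right
      (by rw [hC'def]; linarith [le_abs_self C]) (Real.rpow_nonneg (abs_nonneg _) _))
  set δ : ℝ := ((2 * C')⁻¹ ^ α⁻¹) / 2 with hδdef
  have hs0 : (0:ℝ) < (2 * C')⁻¹ ^ α⁻¹ := Real.rpow_pos_of_pos (by positivity) _
  have hδ0 : 0 < δ := by rw [hδdef]; positivity
  have hsm : C' * (2 * δ) ^ α ≤ 1 / 2 := by
    rw [hδdef, show 2 * ((2 * C')⁻¹ ^ α⁻¹ / 2) = (2 * C')⁻¹ ^ α⁻¹ from by ring,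
      ← Real.rpow_mul (by positivity), inv_mul_cancel₀ (ne_of_gt hα0), Real.rpow_one]
    rw [mul_inv]
    rw [show C' * (2⁻¹ * C'⁻¹) = (C' * C'⁻¹) * 2⁻¹ from by ring,
      mul_inv_cancel₀ (ne_of_gt hC'0), one_mul]
    norm_num
  have hcont : Continuous Γ := continuous_iff_continuousAt.2 fun x => (hderiv x).continuousAt
  obtain ⟨m, hm0, hsep⟩ := curve_sep hL hδ0 hcont hper hinj
  set q : ℝ := (α - 1) * p / 2 with hq
  have hq1 : -1 < q := by
    rw [hq]
    have h1 : -2 < (α - 1) * p := by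
      have h2 : -(2/p) < α - 1 := by linarith
      calc (-2 : ℝ) = (-(2/p)) * p := by field_simp
        _ < (α - 1) * p := mul_lt_mul_of_pos_right h2 hp0
    linarith
  set J : ℝ≥0∞ := ∫⁻ u in Icc (-(2*L)) (2*L),
    (ENNReal.ofReal (u ^ q) + ENNReal.ofReal ((-u) ^ q)) with hJdef
  have hJtop : J < ⊤ := J_lt_top hL hq1
  set c₀ : ℝ≥0∞ := ENNReal.ofReal ((2:ℝ) ^ p * (32 / m) ^ p) with hc₀
  set c₁ : ℝ≥0∞ := ENNReal.ofReal ((2:ℝ) ^ p * (256 * C') ^ p) with hc₁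
  set Ψ : ℝ → ℝ → ℝ≥0∞ := fun s t => ENNReal.ofReal (min |s - t| (L - |s - t|) ^ q) with hΨ
  have hΨnetop : ∀ s t, Ψ s t ≠ ⊤ := fun s t => ENNReal.ofReal_ne_top
  have hΨint : ∀ x ∈ Ico (0:ℝ) L, ∫⁻ t in Ico (0:ℝ) L, Ψ x t ≤ 3 * J :=
    fun x hx => psi_int hL hq1 hx
  have hinner : ∀ x ∈ Ico (0:ℝ) L, ∀ y ∈ Ico (0:ℝ) L,
      ∫⁻ z in Ico (0:ℝ) L, ENNReal.ofReal (mengerCurv (Γ x) (Γ y) (Γ z) ^ p)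
        ≤ c₀ * ENNReal.ofReal L + c₁ * (3 * J) * Ψ x y := by
    intro x hx y hy
    calc ∫⁻ z in Ico (0:ℝ) L, ENNReal.ofReal (mengerCurv (Γ x) (Γ y) (Γ z) ^ p)
        ≤ ∫⁻ z in Ico (0:ℝ) L, (c₀ + (c₁ * Ψ x y) * Ψ x z) := by
          apply setLIntegral_mono' measurableSet_Ico
          intro z hz
          refine (pt_bound_ennreal hL hδ0 hderiv hunit hhol' hper hC'0 hα0.le hα1 hsm
            hm0 hsep hp0 hx hy hz).trans (le_of_eq ?_)
          rw [mul_assoc]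
      _ = c₀ * volume (Ico (0:ℝ) L) + (c₁ * Ψ x y) * ∫⁻ z in Ico (0:ℝ) L, Ψ x z := by
          rw [lintegral_add_left measurable_const, setLIntegral_const,
            lintegral_const_mul' _ _ (ENNReal.mul_ne_top ENNReal.ofReal_ne_top (hΨnetop x y))]
      _ ≤ c₀ * ENNReal.ofReal L + (c₁ * Ψ x y) * (3 * J) := by
          gcongr
          · rw [Real.volume_Ico, sub_zero]
          · exact hΨint x hx
      _ = c₀ * ENNReal.ofReal L + c₁ * (3 * J) * Ψ x y := by ring
  have houter : ∀ x ∈ Ico (0:ℝ) L,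
      (∫⁻ y in Ico (0:ℝ) L, ∫⁻ z in Ico (0:ℝ) L,
        ENNReal.ofReal (mengerCurv (Γ x) (Γ y) (Γ z) ^ p))
        ≤ c₀ * ENNReal.ofReal L * ENNReal.ofReal L + c₁ * (3 * J) * (3 * J) := by
    intro x hx
    calc (∫⁻ y in Ico (0:ℝ) L, ∫⁻ z in Ico (0:ℝ) L,
          ENNReal.ofReal (mengerCurv (Γ x) (Γ y) (Γ z) ^ p))
        ≤ ∫⁻ y in Ico (0:ℝ) L, (c₀ * ENNReal.ofReal L + c₁ * (3 * J) * Ψ x y) :=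
          setLIntegral_mono' measurableSet_Ico (hinner x hx)
      _ = c₀ * ENNReal.ofReal L * volume (Ico (0:ℝ) L)
          + c₁ * (3 * J) * ∫⁻ y in Ico (0:ℝ) L, Ψ x y := by
          rw [lintegral_add_left measurable_const, setLIntegral_const,
            lintegral_const_mul' _ _ (ENNReal.mul_ne_top ENNReal.ofReal_ne_top
              (ENNReal.mul_ne_top (by norm_num) hJtop.ne))]
      _ ≤ c₀ * ENNReal.ofReal L * ENNReal.ofReal L + c₁ * (3 * J) * (3 * J) := by
          gcongr
          · rw [Real.volume_Ico, sub_zero]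
          · exact hΨint x hx
  unfold mengerEnergy
  have h3J : (3 : ℝ≥0∞) * J ≠ ⊤ := ENNReal.mul_ne_top (by norm_num) hJtop.ne
  calc (∫⁻ x in Ico (0:ℝ) L, ∫⁻ y in Ico (0:ℝ) L, ∫⁻ z in Ico (0:ℝ) L,
        ENNReal.ofReal (mengerCurv (Γ x) (Γ y) (Γ z) ^ p))
      ≤ ∫⁻ _ in Ico (0:ℝ) L,
          (c₀ * ENNReal.ofReal L * ENNReal.ofReal L + c₁ * (3 * J) * (3 * J)) :=
        setLIntegral_mono' measurableSet_Ico houter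
    _ = (c₀ * ENNReal.ofReal L * ENNReal.ofReal L + c₁ * (3 * J) * (3 * J))
        * volume (Ico (0:ℝ) L) := setLIntegral_const _ _
    _ < ⊤ := by
        rw [lt_top_iff_ne_top]
        apply ENNReal.mul_ne_top
        · apply ENNReal.add_ne_top.2
          constructor
          · exact ENNReal.mul_ne_top (ENNReal.mul_ne_top ENNReal.ofReal_ne_top
              ENNReal.ofReal_ne_top) ENNReal.ofReal_ne_top
          · exact ENNReal.mul_ne_top (ENNReal.mul_ne_top ENNReal.ofReal_ne_top h3J) h3J
        · rw [Real.volume_Ico]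
          exact ENNReal.ofReal_ne_top
end

section
/- Let F : ℝ → ℝ be Lipschitz with Lipschitz constant L, and for 0 ≤ x < z < y denote the graph points ⃗t = (t, F(t)). If the angle between ⃗y - ⃗x and ⃗z - ⃗x is at most π/3, then the Menger curvature satisfies 1/R(⃗x, ⃗y, ⃗z) ≥ C(L) · |(F(y)-F(x))/(y-x) - (F(z)-F(x))/(z-x)| · (z-x)/(y-x)², for a constant C(L) > 0 depending only on L. -/
open MeasureTheory Set Real ENNReal
open Pointwise

/-- The point `(t, F(t)) ∈ ℝ²` on the graph of `F`. -/
noncomputable def graphPt (F : ℝ → ℝ) (t : ℝ) : EuclideanSpace ℝ (Fin 2) :=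
  (EuclideanSpace.equiv (Fin 2) ℝ).symm ![t, F t]

noncomputable instance : Measure.IsAddHaarMeasure (μH[2] : Measure (EuclideanSpace ℝ (Fin 2))) := by
  have h := isAddHaarMeasure_hausdorffMeasure (E := EuclideanSpace ℝ (Fin 2))
  simpa [finrank_euclideanSpace_fin] using h

noncomputable def E2 (v : Fin 2 → ℝ) : EuclideanSpace ℝ (Fin 2) :=
  (EuclideanSpace.equiv (Fin 2) ℝ).symm v

lemma E2_coord (v : Fin 2 → ℝ) (i : Fin 2) : E2 v i = v i := rfl

lemma graphPt_eq (F : ℝ → ℝ) (t : ℝ) : graphPt F t = E2 ![t, F t] := rfl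

/-- the standard triangle -/
noncomputable def stdTri : Set (EuclideanSpace ℝ (Fin 2)) :=
  convexHull ℝ {0, E2 ![1, 0], E2 ![0, 1]}

lemma stdTri_measure_pos : 0 < μH[2] stdTri := by
  apply Measure.measure_pos_of_nonempty_interior
  rw [stdTri, (convex_convexHull ℝ _).interior_nonempty_iff_affineSpan_eq_top,
    affineSpan_convexHull]
  have h0 : ({0, E2 ![1, 0], E2 ![0, 1]} : Set (EuclideanSpace ℝ (Fin 2)))
      = insert 0 {E2 ![1, 0], E2 ![0, 1]} := rfl
  rw [h0]
  have : Submodule.span ℝ ({E2 ![1, 0], E2 ![0, 1]} : Set (EuclideanSpace ℝ (Fin 2))) = ⊤ := by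
    have hb := (EuclideanSpace.basisFun (Fin 2) ℝ).toBasis.span_eq
    have hr : Set.range (EuclideanSpace.basisFun (Fin 2) ℝ).toBasis
        = ({E2 ![1, 0], E2 ![0, 1]} : Set (EuclideanSpace ℝ (Fin 2))) := by
      ext p
      simp only [Set.mem_range, Set.mem_insert_iff, Set.mem_singleton_iff]
      constructor
      · rintro ⟨i, rfl⟩
        fin_cases i
        · left
          ext j; fin_cases j <;> simp [EuclideanSpace.basisFun_apply, E2, EuclideanSpace.single]
        · right
          ext j; fin_cases j <;> simp [EuclideanSpace.basisFun_apply, E2, EuclideanSpace.single]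
      · rintro (rfl | rfl)
        · exact ⟨0, by ext j; fin_cases j <;>
            simp [EuclideanSpace.basisFun_apply, E2, EuclideanSpace.single]⟩
        · exact ⟨1, by ext j; fin_cases j <;>
            simp [EuclideanSpace.basisFun_apply, E2, EuclideanSpace.single]⟩
    rw [hr] at hb
    exact hb
  apply AffineSubspace.coe_injective
  rw [affineSpan_insert_zero, this, AffineSubspace.top_coe, Submodule.top_coe]

lemma stdTri_measure_lt_top : μH[2] stdTri < ⊤ :=
  ((((Set.finite_singleton _).insert _).insert _).isCompact_convexHull ℝ).measure_lt_top

lemma det_toEuclideanLin (M : Matrix (Fin 2) (Fin 2) ℝ) :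
    LinearMap.det (Matrix.toEuclideanLin M) = M.det := by
  have : Matrix.toEuclideanLin M
      = (WithLp.linearEquiv 2 ℝ (Fin 2 → ℝ)).symm.conj (Matrix.toLin' M) := rfl
  rw [this, LinearEquiv.conj_apply, LinearMap.comp_assoc, LinearMap.det_conj,
    LinearMap.det_toLin']

/-- area of a general triangle -/
lemma measure_triangle (a u v : EuclideanSpace ℝ (Fin 2)) (M : Matrix (Fin 2) (Fin 2) ℝ)
    (hu : Matrix.toEuclideanLin M (E2 ![1, 0]) = u) (hv : Matrix.toEuclideanLin M (E2 ![0, 1]) = v) :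
    μH[2] (convexHull ℝ {a, a + u, a + v}) = ENNReal.ofReal |M.det| * μH[2] stdTri := by
  have h1 : (Matrix.toEuclideanLin M) '' {0, E2 ![1, 0], E2 ![0, 1]} = {0, u, v} := by
    rw [Set.image_insert_eq, Set.image_insert_eq, Set.image_singleton, map_zero, hu, hv]
  have h2 : a +ᵥ ((Matrix.toEuclideanLin M) '' stdTri) = convexHull ℝ {a, a + u, a + v} := by
    rw [stdTri, LinearMap.image_convexHull, h1, ← convexHull_vadd]
    congr 1
    rw [Set.vadd_set_insert, Set.vadd_set_insert, Set.vadd_set_singleton]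
    simp [vadd_eq_add]
  rw [← h2, measure_vadd, Measure.addHaar_image_linearMap, det_toEuclideanLin]

lemma dist_graphPt_le (L : ℝ) (F : ℝ → ℝ) (hF : ∀ a b : ℝ, |F a - F b| ≤ L * |a - b|)
    (s t : ℝ) : dist (graphPt F s) (graphPt F t) ≤ (1 + L) * |s - t| := by
  rw [EuclideanSpace.dist_eq, Fin.sum_univ_two]
  have h0 : dist (graphPt F s 0) (graphPt F t 0) = |s - t| := by
    simp [graphPt_eq, E2_coord, Real.dist_eq]
  have h1 : dist (graphPt F s 1) (graphPt F t 1) = |F s - F t| := by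
    simp [graphPt_eq, E2_coord, Real.dist_eq]
  rw [h0, h1]
  have hle : Real.sqrt (|s - t| ^ 2 + |F s - F t| ^ 2) ≤ |s - t| + |F s - F t| := by
    rw [show |s - t| + |F s - F t| = Real.sqrt ((|s - t| + |F s - F t|) ^ 2) from
      (Real.sqrt_sq (by positivity)).symm]
    apply Real.sqrt_le_sqrt
    nlinarith [abs_nonneg (s - t), abs_nonneg (F s - F t)]
  calc Real.sqrt (|s - t| ^ 2 + |F s - F t| ^ 2) ≤ |s - t| + |F s - F t| := hle
    _ ≤ |s - t| + L * |s - t| := by linarith [hF s t]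
    _ = (1 + L) * |s - t| := by ring


/-- For `F : ℝ → ℝ` Lipschitz with constant `L` and graph points
`⃗t = (t, F t)` with `0 ≤ x < z < y`, if the angle between `⃗y - ⃗x` and `⃗z - ⃗x` is
at most `π/3`, then `1/R(⃗x,⃗y,⃗z) ≥ C(L)·|ΔF(y)-ΔF(z)|·(z-x)/(y-x)²` where
`ΔF(t) = (F t - F x)/(t - x)` and `C(L) > 0` depends only on `L`. -/
theorem mengerCurv_lowerBound_graph (L : ℝ) (hL : 0 ≤ L) :
    ∃ C : ℝ, 0 < C ∧
      ∀ F : ℝ → ℝ, (∀ a b : ℝ, |F a - F b| ≤ L * |a - b|) →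
      ∀ x z y : ℝ, 0 ≤ x → x < z → z < y →
        InnerProductGeometry.angle (graphPt F y - graphPt F x) (graphPt F z - graphPt F x)
          ≤ π / 3 →
        C * |(F y - F x) / (y - x) - (F z - F x) / (z - x)| * (z - x) / (y - x) ^ 2
          ≤ mengerCurv (graphPt F x) (graphPt F y) (graphPt F z) := by
  set V : ℝ := (μH[2] stdTri).toReal with hV
  have hVpos : 0 < V :=
    ENNReal.toReal_pos stdTri_measure_pos.ne' stdTri_measure_lt_top.ne
  have hLpos : (0:ℝ) < 1 + L := by linarith
  refine ⟨4 * V / (1 + L) ^ 3, by positivity, ?_⟩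
  intro F hF x z y hx hxz hzy _
  set a := graphPt F x
  set b := graphPt F y
  set c := graphPt F z
  have hw : (0:ℝ) < y - x := by linarith
  have hs : (0:ℝ) < z - x := by linarith
  set M : Matrix (Fin 2) (Fin 2) ℝ := !![y - x, z - x; F y - F x, F z - F x] with hM
  have hu : Matrix.toEuclideanLin M (E2 ![1, 0]) = b - a := by
    ext i
    fin_cases i <;>
      simp [Matrix.toEuclideanLin_apply, E2, hM, Matrix.mulVec, dotProduct,
        Fin.sum_univ_two, a, b, graphPt]
  have hv : Matrix.toEuclideanLin M (E2 ![0, 1]) = c - a := by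
    ext i
    fin_cases i <;>
      simp [Matrix.toEuclideanLin_apply, E2, hM, Matrix.mulVec, dotProduct,
        Fin.sum_univ_two, a, c, graphPt]
  have hset : ({a, b, c} : Set (EuclideanSpace ℝ (Fin 2)))
      = {a, a + (b - a), a + (c - a)} := by
    rw [add_sub_cancel, add_sub_cancel]
  have harea : (μH[2] (convexHull ℝ ({a, b, c} : Set (EuclideanSpace ℝ (Fin 2))))).toReal
      = |M.det| * V := by
    rw [hset, measure_triangle a (b - a) (c - a) M hu hv, ENNReal.toReal_mul,
      ENNReal.toReal_ofReal (abs_nonneg _)]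
  set D : ℝ := |M.det| with hD
  have hDdet : M.det = (y - x) * (F z - F x) - (z - x) * (F y - F x) := by
    simp [hM, Matrix.det_fin_two]
  -- distances
  have hab : dist a b ≤ (1 + L) * (y - x) := by
    have := dist_graphPt_le L F hF x y
    rwa [abs_of_nonpos (by linarith), neg_sub] at this
  have hbc : dist b c ≤ (1 + L) * (y - x) := by
    have := dist_graphPt_le L F hF y z
    rw [abs_of_nonneg (by linarith)] at this
    apply this.trans
    have := hLpos.le
    nlinarith
  have hac : dist a c ≤ (1 + L) * (y - x) := by
    have := dist_graphPt_le L F hF x z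
    rw [abs_of_nonpos (by linarith), neg_sub] at this
    apply this.trans
    nlinarith
  have habpos : 0 < dist a b := dist_pos.mpr (by
    intro h
    have := congrArg (fun p : EuclideanSpace ℝ (Fin 2) => p 0) h
    simp [a, b, graphPt_eq, E2_coord] at this
    exact absurd this (by intro h'; linarith))
  have hbcpos : 0 < dist b c := dist_pos.mpr (by
    intro h
    have := congrArg (fun p : EuclideanSpace ℝ (Fin 2) => p 0) h
    simp [b, c, graphPt_eq, E2_coord] at this
    exact absurd this (by intro h'; linarith))
  have hacpos : 0 < dist a c := dist_pos.mpr (by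
    intro h
    have := congrArg (fun p : EuclideanSpace ℝ (Fin 2) => p 0) h
    simp [a, c, graphPt_eq, E2_coord] at this
    exact absurd this (by intro h'; linarith))
  set P : ℝ := dist a b * dist b c * dist a c with hP
  have hPpos : 0 < P := by positivity
  have hPle : P ≤ ((1 + L) * (y - x)) ^ 3 := by
    rw [hP]
    calc dist a b * dist b c * dist a c
        ≤ ((1 + L) * (y - x)) * ((1 + L) * (y - x)) * ((1 + L) * (y - x)) := by
          gcongr
      _ = ((1 + L) * (y - x)) ^ 3 := by ring
  have hcurv : mengerCurv a b c = 4 * (D * V) / P := by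
    rw [mengerCurv, harea]
  have hAbs : |(F y - F x) / (y - x) - (F z - F x) / (z - x)| = D / ((y - x) * (z - x)) := by
    have : (F y - F x) / (y - x) - (F z - F x) / (z - x)
        = -(M.det / ((y - x) * (z - x))) := by
      rw [hDdet]; field_simp; ring
    rw [this, abs_neg, abs_div, abs_of_pos (by positivity : (0:ℝ) < (y - x) * (z - x)), hD]
  rw [hcurv, hAbs]
  have hDnn : 0 ≤ D := abs_nonneg _
  have hlhs : 4 * V / (1 + L) ^ 3 * (D / ((y - x) * (z - x))) * (z - x) / (y - x) ^ 2
      = 4 * (D * V) / (((1 + L) * (y - x)) ^ 3) := by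
    field_simp
  rw [hlhs]
  exact div_le_div_of_nonneg_left (by positivity) hPpos hPle
end
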